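/- arXiv:1310.2458 — 3 statements merged into one kernel-verified Lean document; each statement's English description precedes it below -/
import Mathlib

section
/- Let Φ assign to every polytope P ⊆ ℝ^d a finite signed Borel measure Φ(P,·) on ℝ^d, and assume Φ is translation covariant (Φ(P+x,A+x) = Φ(P,A) for all x ∈ ℝ^d, all Borel A) and locally determined (Φ(P,A) = Φ(Q,A) whenever there is an open set U ⊆ ℝ^d with P∩U = Q∩U and A ⊆ U). Then for every polytope P the measure Φ(P,·) is concentrated on P; that is, Φ(P,A) = 0 for every Borel set A with A ∩ P = ∅. -/
open MeasureTheory Set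
open scoped RealInnerProductSpace Pointwise Classical

noncomputable section

/-- Euclidean space ℝ^d. -/
abbrev Euc (d : ℕ) := EuclideanSpace ℝ (Fin d)

variable {d : ℕ}

/-- A polytope: the convex hull of a nonempty finite set of points. -/
def IsPolytope (P : Set (Euc d)) : Prop :=
  ∃ S : Finset (Euc d), S.Nonempty ∧ P = convexHull ℝ (S : Set (Euc d))

/-- A face of a polytope: a nonempty extreme convex subset. -/
def IsFace (P F : Set (Euc d)) : Prop :=
  F.Nonempty ∧ Convex ℝ F ∧ IsExtreme ℝ P F

/-- The dimension of a set: the dimension of its affine hull. -/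
def setDim (F : Set (Euc d)) : ℕ := Module.finrank ℝ (affineSpan ℝ F).direction

/-- The collection of `j`-dimensional faces of `P`. -/
def facesOfDim (P : Set (Euc d)) (j : ℕ) : Set (Set (Euc d)) :=
  {F | IsFace P F ∧ setDim F = j}

/-- Translation of a set by a vector. -/
def shiftSet (x : Euc d) (S : Set (Euc d)) : Set (Euc d) := (· + x) '' S

/-- The normal cone `N(P,F)` of `P` at `F`. -/
def normalConeOf (P F : Set (Euc d)) : Set (Euc d) :=
  {u | ∀ y ∈ F, ∀ z ∈ P, ⟪z, u⟫ ≤ ⟪y, u⟫}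

/-- `n(P,F)`: the intersection of the normal cone with the unit sphere. -/
def nPF (P F : Set (Euc d)) : Set (Euc d) :=
  normalConeOf P F ∩ Metric.sphere (0 : Euc d) 1

/-- Spherical polytopes of dimension `d - j - 1`: exactly the sets of the form `n(P,F)`
for a `j`-face `F` of a polytope `P`. -/
def IsSphericalPolytope (d j : ℕ) (p : Set (Euc d)) : Prop :=
  ∃ P F : Set (Euc d), IsPolytope P ∧ F ∈ facesOfDim P j ∧ p = nPF P F

/-- `hr j F A = H^j(F ∩ A)`: restricted `j`-dimensional Hausdorff measure. -/
def hr (j : ℕ) (F A : Set (Euc d)) : ℝ := (μH[(j : ℝ)] (F ∩ A)).toReal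

/-- Measurability of a functional on polytopes, w.r.t. the Borel σ-algebra of the
Hausdorff metric on the space of polytopes. -/
def PolytopeMeasurable (g : Set (Euc d) → ℝ) : Prop :=
  @Measurable {K : TopologicalSpace.NonemptyCompacts (Euc d) // IsPolytope (K : Set (Euc d))} ℝ
    (borel _) _ (fun K => g (K : Set (Euc d)))

/-- Measurability of a function on `(d-j-1)`-dimensional spherical polytopes. -/
def SphMeasurable (d j : ℕ) (f : Set (Euc d) → ℝ) : Prop :=
  @Measurable
    {K : TopologicalSpace.NonemptyCompacts (Euc d) // IsSphericalPolytope d j (K : Set (Euc d))} ℝ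
    (borel _) _ (fun K => f (K : Set (Euc d)))

/-- `Φ` is a local extension of `φ`. -/
structure IsLocalExtension (φ : Set (Euc d) → ℝ) (Φ : Set (Euc d) → Set (Euc d) → ℝ) : Prop where
  meas : ∀ A : Set (Euc d), MeasurableSet A → PolytopeMeasurable (fun P => Φ P A)
  signed_measure : ∀ P : Set (Euc d), IsPolytope P →
    ∃ μ : SignedMeasure (Euc d), ∀ A : Set (Euc d), MeasurableSet A → Φ P A = μ A
  total : ∀ P : Set (Euc d), IsPolytope P → φ P = Φ P univ
  covariant : ∀ P : Set (Euc d), IsPolytope P → ∀ (A : Set (Euc d)) (x : Euc d),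
    Φ (shiftSet x P) (shiftSet x A) = Φ P A
  locally_determined : ∀ P Q : Set (Euc d), IsPolytope P → IsPolytope Q →
    ∀ A U : Set (Euc d), IsOpen U → P ∩ U = Q ∩ U → A ⊆ U → Φ P A = Φ Q A

/-- The `j`-homogeneous kernel built from an associated function `f j`. -/
def kernelJ (f : ℕ → Set (Euc d) → ℝ) (j : ℕ) (P A : Set (Euc d)) : ℝ :=
  ∑ᶠ F ∈ facesOfDim P j, f j (nPF P F) * hr j F A

/-- The full kernel built from associated functions `f 0, …, f (d-1)` and the constant `c`. -/
def kernelFull (f : ℕ → Set (Euc d) → ℝ) (c : ℝ) (P A : Set (Euc d)) : ℝ :=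
  (∑ j ∈ Finset.range d, kernelJ f j P A) + c * (volume (P ∩ A)).toReal

/-- The `j`-homogeneous part of the kernel, `j = 0, …, d`. -/
def kernelHom (f : ℕ → Set (Euc d) → ℝ) (c : ℝ) (j : ℕ) (P A : Set (Euc d)) : ℝ :=
  if j = d then c * (volume (P ∩ A)).toReal else kernelJ f j P A

/-- The associated function in degree `j`, with the convention `f_d = c`. -/
def fAssoc (f : ℕ → Set (Euc d) → ℝ) (c : ℝ) (j : ℕ) : Set (Euc d) → ℝ :=
  if j = d then fun _ => c else f j

/-- Gram matrix of a finite family of vectors. -/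
def gram {n : Type*} [Fintype n] (w : n → Euc d) : Matrix n n ℝ :=
  Matrix.of fun i l => ⟪w i, w l⟫

/-- An orthonormal basis of a subspace, as a family of vectors of the ambient space. -/
def obFam (U : Submodule ℝ (Euc d)) : Fin (Module.finrank ℝ U) → Euc d :=
  fun i => (stdOrthonormalBasis ℝ U i : Euc d)

/-- The determinant `[U,V]` of two subspaces: the square root of the Gram determinant of the
concatenation of orthonormal bases of `U^⊥` and `V^⊥`. -/
def subDet2 (U V : Submodule ℝ (Euc d)) : ℝ :=
  Real.sqrt (Matrix.det (gram (Sum.elim (obFam Uᗮ) (obFam Vᗮ))))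

/-- The determinant `[U_1,…,U_k]` of a family of subspaces. -/
def subDetFam {k : ℕ} (Us : Fin k → Submodule ℝ (Euc d)) : ℝ :=
  Real.sqrt (Matrix.det (gram
    (fun p : (i : Fin k) × Fin (Module.finrank ℝ (Us i)ᗮ) => obFam (Us p.1)ᗮ p.2)))

/-- The direction space of a set (of its affine hull). -/
def dirSpace (F : Set (Euc d)) : Submodule ℝ (Euc d) := (affineSpan ℝ F).direction

/-- The mixed spherical polytope `n(P,Q;F,G)`: the intersection with the unit sphere of the
normal cone of `P ∩ (Q+x)` at `F ∩ (G+x)`, for a translation `x` making the relative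
interiors of `F` and `G + x` meet (for faces in general relative position this does not
depend on the choice of `x`). -/
def nMixed2 (P Q F G : Set (Euc d)) : Set (Euc d) :=
  if h : ∃ x : Euc d, (intrinsicInterior ℝ F ∩ intrinsicInterior ℝ (shiftSet x G)).Nonempty then
    nPF (P ∩ shiftSet h.choose Q) (F ∩ shiftSet h.choose G)
  else ∅

/-- The mixed spherical polytope `n(P_1,…,P_k;F_1,…,F_k)`. -/
def nMixedFam {k : ℕ} (P F : Fin k → Set (Euc d)) : Set (Euc d) :=
  if h : ∃ x : Fin k → Euc d,
      (⋂ i, intrinsicInterior ℝ (shiftSet (x i) (F i))).Nonempty then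
    nPF (⋂ i, shiftSet (h.choose i) (P i)) (⋂ i, shiftSet (h.choose i) (F i))
  else ∅

/-- The mixed measure `Φ^{(j)}_{m, d-m+j}(P,Q; A × B)`. -/
def mixedMeas2 (f : ℕ → Set (Euc d) → ℝ) (c : ℝ) (j m : ℕ)
    (P Q A B : Set (Euc d)) : ℝ :=
  ∑ᶠ F ∈ facesOfDim P m, ∑ᶠ G ∈ facesOfDim Q (d - m + j),
    fAssoc f c j (nMixed2 P Q F G) * subDet2 (dirSpace F) (dirSpace G)
      * hr m F A * hr (d - m + j) G B

/-- The mixed measure `Φ^{(j)}_{m_1,…,m_k}(P_1,…,P_k; A_1 × ⋯ × A_k)`. -/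
def mixedMeasFam (f : ℕ → Set (Euc d) → ℝ) (c : ℝ) (j : ℕ) {k : ℕ}
    (m : Fin k → ℕ) (P A : Fin k → Set (Euc d)) : ℝ :=
  ∑ᶠ F ∈ {F : Fin k → Set (Euc d) | ∀ i, F i ∈ facesOfDim (P i) (m i)},
    fAssoc f c j (nMixedFam P F) * subDetFam (fun i => dirSpace (F i))
      * ∏ i, hr (m i) (F i) (A i)

/-- The `j`-th skeleton measure `H^j_skel(P, A)`. -/
def skel (j : ℕ) (P A : Set (Euc d)) : ℝ := ∑ᶠ F ∈ facesOfDim P j, hr j F A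

/-- κ_i, the volume of the i-dimensional unit ball. -/
def ballVol (i : ℕ) : ℝ := Real.pi ^ ((i : ℝ) / 2) / Real.Gamma (1 + (i : ℝ) / 2)

/-- The rotation group SO(d), as a set of matrices. -/
def SOset (d : ℕ) : Set (Matrix (Fin d) (Fin d) ℝ) :=
  {A | A * A.transpose = 1 ∧ A.det = 1}

/-- Mutual general position of two polytopes. -/
def MutualGenPos (P Q : Set (Euc d)) : Prop :=
  P ∩ Q = ∅ ∨
    ∀ j ≤ d, ∀ F ∈ facesOfDim (P ∩ Q) j,
      ∃ k, j ≤ k ∧ k ≤ d ∧ ∃ G ∈ facesOfDim P k, ∃ H ∈ facesOfDim Q (d + j - k),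
        F = closure (intrinsicInterior ℝ G ∩ intrinsicInterior ℝ H)

/-- Mutual general position of a finite family of polytopes. -/
def MutualGenPosFam {m : ℕ} (P : Fin m → Set (Euc d)) : Prop :=
  ∀ i : Fin m, ∀ J : Finset (Fin m), J.Nonempty → i ∉ J →
    MutualGenPos (P i) (⋂ l ∈ J, P l)

/-- `Q` is a standard representation of `S`: `S` is the union of the polytopes `Q i`,
which are in mutual general position. -/
def IsStandardRep {m : ℕ} (S : Set (Euc d)) (Q : Fin m → Set (Euc d)) : Prop :=
  (∀ i, IsPolytope (Q i)) ∧ MutualGenPosFam Q ∧ S = ⋃ i, Q i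

/-- The inclusion-exclusion sum defining the GP-extension of `Φ`. -/
def gpSum (Φ : Set (Euc d) → Set (Euc d) → ℝ) {m : ℕ}
    (Q : Fin m → Set (Euc d)) (A : Set (Euc d)) : ℝ :=
  ∑ J ∈ Finset.univ.powerset.filter (fun J : Finset (Fin m) => J.Nonempty),
    (-1 : ℝ) ^ (J.card + 1) *
      (if (⋂ i ∈ J, Q i).Nonempty then Φ (⋂ i ∈ J, Q i) A else 0)

/-- A closed halfspace. -/
def halfspace (u : Euc d) (t : ℝ) : Set (Euc d) := {x | ⟪x, u⟫ ≤ t}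

/-- Translation invariance on polytopes. -/
def TranslationInvariant (φ : Set (Euc d) → ℝ) : Prop :=
  ∀ P : Set (Euc d), IsPolytope P → ∀ x : Euc d, φ (shiftSet x P) = φ P

/-- Additivity on polytopes. -/
def AdditiveFunc (φ : Set (Euc d) → ℝ) : Prop :=
  ∀ P Q : Set (Euc d), IsPolytope P → IsPolytope Q → IsPolytope (P ∪ Q) →
    φ (P ∪ Q) + φ (P ∩ Q) = φ P + φ Q

/-- Weak continuity: continuity of `φ` under parallel displacements of the facets. -/
def WeaklyContinuous (φ : Set (Euc d) → ℝ) : Prop :=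
  ∀ (N : ℕ) (u : Fin N → Euc d) (t : Fin N → ℝ), (∀ i, ‖u i‖ = 1) →
    (⋂ i, halfspace (u i) (t i)).Nonempty →
    Bornology.IsBounded (⋂ i, halfspace (u i) (t i)) →
    ContinuousWithinAt (fun s : Fin N → ℝ => φ (⋂ i, halfspace (u i) (s i)))
      {s | (⋂ i, halfspace (u i) (s i)).Nonempty ∧
        Bornology.IsBounded (⋂ i, halfspace (u i) (s i))} t

/-- Standard functional: translation invariant, additive and weakly continuous. -/
def IsStandardFunctional (φ : Set (Euc d) → ℝ) : Prop :=
  TranslationInvariant φ ∧ AdditiveFunc φ ∧ WeaklyContinuous φ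

/-- The cone spanned by a set. -/
def coneOf (p : Set (Euc d)) : Set (Euc d) := {x | ∃ t : ℝ, 0 ≤ t ∧ ∃ y ∈ p, x = t • y}

/-- Simple additivity of a function on `(d-j-1)`-dimensional spherical polytopes. -/
def SimplyAdditive {d : ℕ} (j : ℕ) (f : Set (Euc d) → ℝ) : Prop :=
  ∀ (r : ℕ) (p : Set (Euc d)) (q : Fin r → Set (Euc d)),
    IsSphericalPolytope d j p → (∀ i, IsSphericalPolytope d j (q i)) →
    p = ⋃ i, q i →
    (∀ i l, i ≠ l →
      intrinsicInterior ℝ (coneOf (q i)) ∩ intrinsicInterior ℝ (coneOf (q l)) = ∅) →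
    f p = ∑ i, f (q i)

/-- A polyhedral cone: the positive hull of finitely many vectors. -/
def IsPolyhedralCone (C : Set (Euc d)) : Prop :=
  ∃ S : Finset (Euc d),
    C = {x | ∃ c : Euc d → ℝ, (∀ v ∈ S, 0 ≤ c v) ∧ x = ∑ v ∈ S, c v • v}

/-- The unit cube `[-1/2, 1/2]^d`. -/
def cube (d : ℕ) : Set (Euc d) := {x | ∀ i, |x i| ≤ 1 / 2}

end

section Aux
variable {d : ℕ}

lemma shiftSet_eq_preimage (x : Euc d) (S : Set (Euc d)) :
    shiftSet x S = (fun y => y - x) ⁻¹' S := by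
  ext y
  simp only [shiftSet, Set.mem_image, Set.mem_preimage]
  constructor
  · rintro ⟨a, ha, rfl⟩; simpa using ha
  · intro h; exact ⟨y - x, h, by abel⟩

lemma measurableSet_shiftSet {x : Euc d} {S : Set (Euc d)} (hS : MeasurableSet S) :
    MeasurableSet (shiftSet x S) := by
  rw [shiftSet_eq_preimage]
  exact hS.preimage ((continuous_id.sub continuous_const).measurable)

lemma shiftSet_shiftSet_neg (x : Euc d) (B : Set (Euc d)) :
    shiftSet x (shiftSet (-x) B) = B := by
  simp [shiftSet_eq_preimage, Set.preimage_preimage, sub_neg_eq_add]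

lemma shiftSet_eq_vadd (x : Euc d) (S : Set (Euc d)) : shiftSet x S = x +ᵥ S := by
  ext y
  simp only [shiftSet, Set.mem_image, Set.mem_vadd_set]
  constructor
  · rintro ⟨a, ha, rfl⟩; exact ⟨a, ha, by simp [add_comm]⟩
  · rintro ⟨a, ha, rfl⟩; exact ⟨a, ha, by simp [add_comm]⟩

lemma isPolytope_shiftSet {P : Set (Euc d)} (hP : IsPolytope P) (x : Euc d) :
    IsPolytope (shiftSet x P) := by
  obtain ⟨S, hS, rfl⟩ := hP
  refine ⟨S.image (· + x), hS.image _, ?_⟩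
  rw [Finset.coe_image, shiftSet_eq_vadd, ← convexHull_vadd]
  congr 1
  rw [← shiftSet_eq_vadd]
  rfl

end Aux

/-- a translation covariant, locally determined measure-valued functional on
polytopes is concentrated on the polytope. -/
theorem stmt_1 {d : ℕ} (hd : 1 ≤ d) (Φ : Set (Euc d) → Set (Euc d) → ℝ)
    (hsm : ∀ P : Set (Euc d), IsPolytope P →
      ∃ μ : MeasureTheory.SignedMeasure (Euc d), ∀ A : Set (Euc d), MeasurableSet A → Φ P A = μ A)
    (hcov : ∀ P : Set (Euc d), IsPolytope P → ∀ (A : Set (Euc d)) (x : Euc d),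
      Φ (shiftSet x P) (shiftSet x A) = Φ P A)
    (hloc : ∀ P Q : Set (Euc d), IsPolytope P → IsPolytope Q → ∀ A U : Set (Euc d),
      IsOpen U → P ∩ U = Q ∩ U → A ⊆ U → Φ P A = Φ Q A)
    (P : Set (Euc d)) (hP : IsPolytope P) (A : Set (Euc d)) (hA : MeasurableSet A)
    (hAP : A ∩ P = ∅) :
    Φ P A = 0 := by
  obtain ⟨μ, hμ⟩ := hsm P hP
  have hPc : IsCompact P := by
    obtain ⟨S, -, rfl⟩ := hP
    exact S.finite_toSet.isCompact_convexHull ℝ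
  have hPclosed : IsClosed P := hPc.isClosed
  -- Key step: the claim for bounded B
  have key : ∀ B : Set (Euc d), MeasurableSet B → Bornology.IsBounded B → B ∩ P = ∅ →
      (μ : Set (Euc d) → ℝ) B = 0 := by
    intro B hBm hBb hBP
    obtain ⟨R, hR0, hPBR⟩ : ∃ R : ℝ, 0 < R ∧ P ∪ B ⊆ Metric.ball 0 R :=
      (hPc.isBounded.union hBb).subset_ball_lt 0 0
    have hPR : P ⊆ Metric.ball (0 : Euc d) R := (Set.subset_union_left).trans hPBR
    have hBR : B ⊆ Metric.ball (0 : Euc d) R := (Set.subset_union_right).trans hPBR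
    set e : Euc d := EuclideanSpace.single (⟨0, hd⟩ : Fin d) (1 : ℝ) with he_def
    have he : ‖e‖ = 1 := by simp [he_def]
    set t : ℕ → Euc d := fun n => ((2 * R + 1) * ((n : ℝ) + 1)) • e with ht_def
    have htnorm : ∀ n, ‖t n‖ = (2 * R + 1) * ((n : ℝ) + 1) := by
      intro n
      rw [ht_def]
      rw [norm_smul, he, mul_one, Real.norm_of_nonneg (by positivity)]
    set U : Set (Euc d) := Pᶜ ∩ Metric.ball 0 R with hU_def
    have hU : IsOpen U := hPclosed.isOpen_compl.inter Metric.isOpen_ball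
    have hBU : B ⊆ U := by
      intro y hy
      refine ⟨fun hyP => ?_, hBR hy⟩
      have : y ∈ B ∩ P := ⟨hy, hyP⟩
      rw [hBP] at this
      exact this
    have hPU : ∀ n, P ∩ U = shiftSet (t n) P ∩ U := by
      intro n
      have h1 : P ∩ U = ∅ := by
        ext y
        simp only [hU_def, Set.mem_inter_iff, Set.mem_compl_iff, Set.mem_empty_iff_false,
          iff_false]
        tauto
      have h2 : shiftSet (t n) P ∩ U = ∅ := by
        ext y
        simp only [Set.mem_inter_iff, Set.mem_empty_iff_false, iff_false, not_and]
        rintro ⟨p, hp, rfl⟩ ⟨-, hball⟩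
        have hpn : ‖p‖ < R := by simpa using hPR hp
        have hball' : ‖p + t n‖ < R := by simpa using hball
        have htri : ‖t n‖ ≤ ‖p + t n‖ + ‖p‖ := by
          calc ‖t n‖ = ‖(p + t n) - p‖ := by congr 1; abel
          _ ≤ ‖p + t n‖ + ‖p‖ := norm_sub_le _ _
        have hlow : 2 * R + 1 ≤ ‖t n‖ := by
          rw [htnorm n]
          nlinarith [Nat.cast_nonneg (α := ℝ) n]
        linarith
      rw [h1, h2]
    have hΦshift : ∀ n, Φ P B = Φ P (shiftSet (-(t n)) B) := by
      intro n
      have hQ := isPolytope_shiftSet hP (t n)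
      have h1 := hloc P (shiftSet (t n) P) hP hQ B U hU (hPU n) hBU
      have h2 := hcov P hP (shiftSet (-(t n)) B) (t n)
      rw [shiftSet_shiftSet_neg] at h2
      rw [h1, ← h2]
    set Bn : ℕ → Set (Euc d) := fun n => shiftSet (-(t n)) B with hBn_def
    have hBnm : ∀ n, MeasurableSet (Bn n) := fun n => measurableSet_shiftSet hBm
    have hBneq : ∀ n, (μ : Set (Euc d) → ℝ) (Bn n) = (μ : Set (Euc d) → ℝ) B := by
      intro n
      rw [← hμ _ (hBnm n), ← hμ _ hBm, ← hΦshift n]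
    have hdisj : Pairwise (Function.onFun Disjoint Bn) := by
      intro n m hnm
      rw [Function.onFun, Set.disjoint_left]
      rintro y ⟨b, hb, rfl⟩ ⟨b', hb', heq⟩
      have h1 : ‖b‖ < R := by simpa using hBR hb
      have h2 : ‖b'‖ < R := by simpa using hBR hb'
      have h : b' - t m = b - t n := by simpa [sub_eq_add_neg] using heq
      have h3 : b - b' = t n - t m := by
        calc b - b' = (b - t n) + t n - b' := by abel
        _ = (b' - t m) + t n - b' := by rw [h]
        _ = t n - t m := by abel
      have h4 : ‖t n - t m‖ ≤ ‖b‖ + ‖b'‖ := by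
        rw [← h3]; exact norm_sub_le _ _
      have h5 : 2 * R + 1 ≤ ‖t n - t m‖ := by
        have key2 : t n - t m = ((2 * R + 1) * ((n : ℝ) - m)) • e := by
          rw [ht_def]
          rw [← sub_smul]
          congr 1
          ring
        rw [key2, norm_smul, he, mul_one, Real.norm_eq_abs, abs_mul,
          abs_of_pos (by linarith : (0 : ℝ) < 2 * R + 1)]
        have h0 : (n : ℤ) - m ≠ 0 := sub_ne_zero.mpr (by exact_mod_cast hnm)
        have h1' : (1 : ℤ) ≤ |(n : ℤ) - m| := Int.one_le_abs h0
        have h2' : (1 : ℝ) ≤ |(n : ℝ) - m| := by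
          exact_mod_cast h1'
        nlinarith
      linarith
    have hsum := μ.m_iUnion hBnm hdisj
    have hsummable : Summable (fun _ : ℕ => (μ : Set (Euc d) → ℝ) B) := by
      have := hsum.summable
      simpa only [hBneq] using this
    have hzero := hsummable.tendsto_atTop_zero
    exact (tendsto_nhds_unique hzero tendsto_const_nhds).symm
  -- decompose A into bounded annular pieces
  set An : ℕ → Set (Euc d) :=
    fun n => A ∩ (Metric.ball 0 ((n : ℝ) + 1) \ Metric.ball (0 : Euc d) (n : ℝ)) with hAn_def
  have hAnm : ∀ n, MeasurableSet (An n) :=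
    fun n => hA.inter (measurableSet_ball.diff measurableSet_ball)
  have hAnb : ∀ n, Bornology.IsBounded (An n) := by
    intro n
    exact Metric.isBounded_ball.subset
      ((Set.inter_subset_right).trans (Set.diff_subset))
  have hAnP : ∀ n, An n ∩ P = ∅ := by
    intro n
    apply Set.eq_empty_of_subset_empty
    rw [← hAP]
    exact Set.inter_subset_inter_left _ (Set.inter_subset_left)
  have hAndisjAux : ∀ n m : ℕ, n < m → Disjoint (An n) (An m) := by
    intro n m hlt
    rw [Set.disjoint_left]
    rintro y ⟨-, hy1, -⟩ ⟨-, -, hy2⟩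
    apply hy2
    simp only [Metric.mem_ball, dist_zero_right] at hy1 ⊢
    have hcast : ((n : ℝ) + 1) ≤ (m : ℝ) := by exact_mod_cast hlt
    linarith
  have hAndisj : Pairwise (Function.onFun Disjoint An) := by
    intro n m hnm
    rcases hnm.lt_or_gt with h | h
    · exact hAndisjAux n m h
    · exact (hAndisjAux m n h).symm
  have hAUnion : ⋃ n, An n = A := by
    ext y
    simp only [hAn_def, Set.mem_iUnion, Set.mem_inter_iff, Set.mem_diff, Metric.mem_ball,
      dist_zero_right]
    constructor
    · rintro ⟨n, h, -⟩; exact h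
    · intro hy
      refine ⟨⌊‖y‖⌋₊, hy, ?_, ?_⟩
      · exact Nat.lt_floor_add_one ‖y‖
      · push_neg
        exact Nat.floor_le (norm_nonneg y)
  have hμA : (μ : Set (Euc d) → ℝ) A = ∑' n, (μ : Set (Euc d) → ℝ) (An n) := by
    rw [← hAUnion]
    exact μ.of_disjoint_iUnion hAnm hAndisj
  rw [hμ A hA, hμA]
  have : ∀ n, (μ : Set (Euc d) → ℝ) (An n) = 0 :=
    fun n => key (An n) (hAnm n) (hAnb n) (hAnP n)
  simp [this]
end

section
/- Let j ∈ {0,…,d−1} and let C ⊆ ℝ^d be a pointed polyhedral cone of dimension d−j, i.e. C is the positive hull of finitely many vectors, C ∩ (−C) = {0}, and the linear span of C has dimension d−j. Then there exists a polytope P contained in the cube W = [−1/2,1/2]^d having a j-face F with N(P,F) = C; in particular, every (d−j−1)-dimensional spherical polytope p arises as p = n(P,F) for some polytope P and some j-face F of P. (One may take P = P̃ ∩ W and F = (span C)^⊥ ∩ W, where P̃ is the intersection of all closed halfspaces with 0 on their boundary and outer normal in C.) -/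
open MeasureTheory Set
open scoped RealInnerProductSpace Pointwise Classical

namespace Stmt3Aux

open Finset

variable {d : ℕ}

lemma abs_coord_le_norm (x : Euc d) (i : Fin d) : |x i| ≤ ‖x‖ := by
  rw [EuclideanSpace.norm_eq, ← Real.sqrt_sq_eq_abs]
  apply Real.sqrt_le_sqrt
  calc x i ^ 2 = ‖x i‖ ^ 2 := by rw [Real.norm_eq_abs, sq_abs]
    _ ≤ ∑ j, ‖x j‖ ^ 2 :=
      Finset.single_le_sum (f := fun j => ‖x j‖ ^ 2) (fun j _ => sq_nonneg _) (Finset.mem_univ i)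

lemma mem_cube_of_norm_le {x : Euc d} (h : ‖x‖ ≤ 1 / 2) : x ∈ cube d :=
  fun i => (abs_coord_le_norm x i).trans h

lemma isCompact_cube : IsCompact (cube d) := by
  have hclosed : IsClosed (cube d) := by
    have : cube d = ⋂ i, {x : Euc d | |x i| ≤ 1 / 2} := by
      ext x; simp [cube, Set.mem_iInter]
    rw [this]
    refine isClosed_iInter fun i => ?_
    have hc : Continuous fun x : Euc d => |x i| := by
      have : Continuous fun x : Euc d => x i :=
        (EuclideanSpace.proj (𝕜 := ℝ) i).continuous
      exact this.abs
    exact isClosed_le hc continuous_const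
  have hbdd : cube d ⊆ Metric.closedBall 0 d := by
    intro x hx
    rw [Metric.mem_closedBall, dist_zero_right]
    have h1 : ‖x‖ ≤ Real.sqrt ((d : ℝ) * (1 / 2) ^ 2) := by
      rw [EuclideanSpace.norm_eq]
      apply Real.sqrt_le_sqrt
      calc ∑ i, ‖x i‖ ^ 2 ≤ ∑ _i : Fin d, (1 / 2 : ℝ) ^ 2 := by
            refine Finset.sum_le_sum fun i _ => ?_
            have := hx i
            rw [Real.norm_eq_abs]
            nlinarith [abs_nonneg (x i)]
        _ = (d : ℝ) * (1 / 2) ^ 2 := by simp [Finset.sum_const, mul_comm]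
    refine h1.trans ?_
    have h2 : ((d : ℝ) * (1 / 2) ^ 2) ≤ (d : ℝ) * (d : ℝ) := by
      have hd : (0 : ℝ) ≤ d := Nat.cast_nonneg d
      rcases Nat.eq_zero_or_pos d with h | h
      · simp [h]
      · have : (1 : ℝ) ≤ d := by exact_mod_cast h
        nlinarith
    calc Real.sqrt ((d : ℝ) * (1 / 2) ^ 2) ≤ Real.sqrt ((d : ℝ) * d) :=
          Real.sqrt_le_sqrt h2
      _ = d := Real.sqrt_mul_self (Nat.cast_nonneg d)
  exact (isCompact_closedBall 0 d).of_isClosed_subset hclosed hbdd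

lemma isPolytope_of_halfspaces {ι : Type} [Fintype ι] (u : ι → Euc d) (t : ι → ℝ)
    {P : Set (Euc d)} (hP : P = {x | ∀ i, ⟪x, u i⟫ ≤ t i})
    (hne : P.Nonempty) (hcomp : IsCompact P) : IsPolytope P := by
  classical
  have hconv : Convex ℝ P := by
    rw [hP]
    intro x hx y hy a b ha hb hab
    intro i
    have h1 : ⟪a • x + b • y, u i⟫ = a * ⟪x, u i⟫ + b * ⟪y, u i⟫ := by
      rw [inner_add_left, real_inner_smul_left, real_inner_smul_left]
    rw [Set.mem_setOf_eq] at hx hy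
    calc ⟪a • x + b • y, u i⟫ = a * ⟪x, u i⟫ + b * ⟪y, u i⟫ := h1
      _ ≤ a * t i + b * t i :=
        add_le_add (mul_le_mul_of_nonneg_left (hx i) ha) (mul_le_mul_of_nonneg_left (hy i) hb)
      _ = t i := by rw [← add_mul, hab, one_mul]
  set act : Euc d → Finset ι := fun x => Finset.univ.filter (fun i => ⟪x, u i⟫ = t i) with hact
  have hinj : Set.InjOn act (P.extremePoints ℝ) := by
    intro x hx y hy hxy
    by_contra hne'
    obtain ⟨hxP, hxe⟩ := hx
    set v : Euc d := y - x with hv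
    have hvne : v ≠ 0 := sub_ne_zero.mpr (Ne.symm hne')
    have hxPm : ∀ i, ⟪x, u i⟫ ≤ t i := by rw [hP] at hxP; exact hxP
    set g : ι → ℝ := fun i =>
      if ⟪x, u i⟫ = t i then 1 else (t i - ⟪x, u i⟫) / (|⟪v, u i⟫| + 1) with hg
    have hgpos : ∀ i, 0 < g i := by
      intro i
      rw [hg]
      dsimp only
      split_ifs with h
      · norm_num
      · exact div_pos (sub_pos.mpr (lt_of_le_of_ne (hxPm i) h)) (by positivity)
    set εs : Finset ℝ := insert 1 (Finset.univ.image g) with hεs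
    have hεne : εs.Nonempty := ⟨1, Finset.mem_insert_self _ _⟩
    set ε := εs.min' hεne with hε
    have hall : ∀ a ∈ εs, 0 < a := by
      intro a ha
      rw [hεs, Finset.mem_insert] at ha
      rcases ha with rfl | ha
      · norm_num
      · obtain ⟨i, _, rfl⟩ := Finset.mem_image.mp ha
        exact hgpos i
    have hεpos : 0 < ε := hall _ (εs.min'_mem hεne)
    have hεle : ∀ i, ε ≤ g i := fun i =>
      Finset.min'_le _ _ (Finset.mem_insert_of_mem (Finset.mem_image_of_mem g (Finset.mem_univ i)))
    have hkey : ∀ i, ⟪x, u i⟫ ≠ t i → ∀ s : ℝ, |s| ≤ ε → ⟪x, u i⟫ + s * ⟪v, u i⟫ ≤ t i := by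
      intro i hi s hs
      have hlt : ⟪x, u i⟫ < t i := lt_of_le_of_ne (hxPm i) hi
      have hgi : g i = (t i - ⟪x, u i⟫) / (|⟪v, u i⟫| + 1) := by
        rw [hg]; dsimp only; rw [if_neg hi]
      have hc : (0 : ℝ) ≤ |⟪v, u i⟫| := abs_nonneg _
      have hεgi := hεle i
      rw [hgi] at hεgi
      have hεc : ε * (|⟪v, u i⟫| + 1) ≤ t i - ⟪x, u i⟫ :=
        (le_div_iff₀ (by positivity)).mp hεgi
      have h1 : s * ⟪v, u i⟫ ≤ |s| * |⟪v, u i⟫| := by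
        calc s * ⟪v, u i⟫ ≤ |s * ⟪v, u i⟫| := le_abs_self _
          _ = |s| * |⟪v, u i⟫| := abs_mul _ _
      have h2 : |s| * |⟪v, u i⟫| ≤ ε * |⟪v, u i⟫| := mul_le_mul_of_nonneg_right hs hc
      nlinarith
    set x₁ : Euc d := x + ε • v with hx₁
    set x₂ : Euc d := x - ε • v with hx₂
    have hact_eq : ∀ i, ⟪x, u i⟫ = t i → ⟪v, u i⟫ = 0 := by
      intro i hi
      have hix : i ∈ act x := Finset.mem_filter.mpr ⟨Finset.mem_univ _, hi⟩
      have hiy : i ∈ act y := by rw [← hxy]; exact hix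
      have hyi : ⟪y, u i⟫ = t i := (Finset.mem_filter.mp hiy).2
      rw [hv, inner_sub_left, hyi, hi, sub_self]
    have hx₁P : x₁ ∈ P := by
      rw [hP]
      intro i
      rw [hx₁, inner_add_left, real_inner_smul_left]
      by_cases h : ⟪x, u i⟫ = t i
      · rw [hact_eq i h, mul_zero, add_zero, h]
      · exact hkey i h ε (by rw [abs_of_pos hεpos])
    have hx₂P : x₂ ∈ P := by
      rw [hP]
      intro i
      rw [hx₂, sub_eq_add_neg, inner_add_left, inner_neg_left, real_inner_smul_left, ← neg_mul]
      by_cases h : ⟪x, u i⟫ = t i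
      · rw [hact_eq i h, mul_zero, add_zero, h]
      · exact hkey i h (-ε) (by rw [abs_neg, abs_of_pos hεpos])
    have hseg : x ∈ openSegment ℝ x₁ x₂ := by
      refine ⟨1 / 2, 1 / 2, by norm_num, by norm_num, by norm_num, ?_⟩
      rw [hx₁, hx₂]
      module
    have := hxe hx₁P hx₂P hseg
    have hx₁x : x₁ = x := this
    rw [hx₁] at hx₁x
    have : ε • v = 0 := by
      have := congrArg (fun z => z - x) hx₁x
      simpa [add_sub_cancel_left] using this
    rcases smul_eq_zero.mp this with h | h
    · exact hεpos.ne' h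
    · exact hvne h
  have hfin : (P.extremePoints ℝ).Finite :=
    Set.Finite.of_finite_image (Set.toFinite _) hinj
  have hKM := closure_convexHull_extremePoints hcomp hconv
  have hclos : IsClosed (convexHull ℝ (P.extremePoints ℝ)) := hfin.isClosed_convexHull ℝ
  have hPeq : convexHull ℝ (P.extremePoints ℝ) = P := by
    conv_rhs => rw [← hKM]
    exact hclos.closure_eq.symm
  have hne' : (P.extremePoints ℝ).Nonempty := by
    by_contra h
    rw [Set.not_nonempty_iff_eq_empty] at h
    rw [h, convexHull_empty] at hPeq
    exact hne.ne_empty hPeq.symm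
  refine ⟨hfin.toFinset, ?_, ?_⟩
  · rwa [Set.Finite.toFinset_nonempty]
  · rw [Set.Finite.coe_toFinset]; exact hPeq.symm

/-- The positive hull of a finite set. -/
def coneSet (S : Finset (Euc d)) : Set (Euc d) :=
  {x | ∃ c : Euc d → ℝ, (∀ v ∈ S, 0 ≤ c v) ∧ x = ∑ v ∈ S, c v • v}

lemma coneSet_mono {T S : Finset (Euc d)} (h : T ⊆ S) : coneSet T ⊆ coneSet S := by
  rintro x ⟨c, hc, rfl⟩
  classical
  refine ⟨fun v => if v ∈ T then c v else 0, fun v _ => ?_, ?_⟩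
  · show (0:ℝ) ≤ if v ∈ T then c v else 0
    by_cases hv : v ∈ T
    · simpa [hv] using hc v hv
    · simp [hv]
  · show (∑ v ∈ T, c v • v) = ∑ v ∈ S, (if v ∈ T then c v else 0) • v
    rw [← Finset.sum_subset h (fun v _ hvT => by simp [hvT])]
    exact Finset.sum_congr rfl fun v hv => by simp [hv]

lemma caratheodory (T : Finset (Euc d)) :
    ∀ x ∈ coneSet T, ∃ T' : Finset (Euc d), T' ⊆ T ∧
      LinearIndependent ℝ (fun i : {v // v ∈ T'} => (i : Euc d)) ∧ x ∈ coneSet T' := by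
  classical
  induction T using Finset.strongInductionOn with
  | _ T ih =>
  intro x hx
  by_cases hli : LinearIndependent ℝ (fun i : {v // v ∈ T} => (i : Euc d))
  · exact ⟨T, Finset.Subset.refl T, hli, hx⟩
  obtain ⟨c, hc, hxc⟩ := hx
  rw [Fintype.not_linearIndependent_iff] at hli
  obtain ⟨g, hgsum, i₁, hgi₁⟩ : ∃ g : {v // v ∈ T} → ℝ,
      ∑ i, g i • (i : Euc d) = 0 ∧ ∃ i, 0 < g i := by
    obtain ⟨g, hgsum, i₁, hgi₁⟩ := hli
    rcases hgi₁.lt_or_gt with h | h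
    · refine ⟨-g, ?_, i₁, by simpa using h⟩
      have : ∑ i, -(g i • (i : Euc d)) = 0 := by
        rw [Finset.sum_neg_distrib, hgsum, neg_zero]
      simpa [neg_smul] using this
    · exact ⟨g, hgsum, i₁, h⟩
  set Tp : Finset {v // v ∈ T} := Finset.univ.filter (fun i => 0 < g i) with hTp
  have hTpne : Tp.Nonempty := ⟨i₁, Finset.mem_filter.mpr ⟨Finset.mem_univ _, hgi₁⟩⟩
  obtain ⟨i₀, hi₀Tp, hi₀⟩ := Tp.exists_mem_eq_inf' hTpne (fun i => c ↑i / g i)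
  have hgi₀ : 0 < g i₀ := (Finset.mem_filter.mp hi₀Tp).2
  have hrnn : 0 ≤ c ↑i₀ / g i₀ := div_nonneg (hc _ i₀.2) hgi₀.le
  have hrle : ∀ i ∈ Tp, c ↑i₀ / g i₀ ≤ c ↑i / g i := by
    intro i hi
    rw [← hi₀]
    exact Finset.inf'_le _ hi
  have hgext_sum : ∑ v ∈ T, (if h : v ∈ T then g ⟨v, h⟩ else 0) • v = 0 := by
    rw [← Finset.sum_attach T (fun v => (if h : v ∈ T then g ⟨v, h⟩ else 0) • v)]
    have heq : ∀ i ∈ T.attach,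
        (if h : (↑i : Euc d) ∈ T then g ⟨↑i, h⟩ else 0) • (↑i : Euc d) = g i • (↑i : Euc d) := by
      intro i _
      rw [dif_pos i.2, Subtype.coe_eta]
    rw [Finset.sum_congr rfl heq, ← Finset.univ_eq_attach]
    exact hgsum
  have hc' : ∀ v, v ∈ T →
      0 ≤ c v - (c ↑i₀ / g i₀) * (if h : v ∈ T then g ⟨v, h⟩ else 0) := by
    intro v hv
    rw [dif_pos hv]
    rcases lt_or_ge 0 (g ⟨v, hv⟩) with hpos | hneg
    · have hmem : (⟨v, hv⟩ : {w // w ∈ T}) ∈ Tp :=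
        Finset.mem_filter.mpr ⟨Finset.mem_univ _, hpos⟩
      have h1 := hrle _ hmem
      have h2 : (c ↑i₀ / g i₀) * g ⟨v, hv⟩ ≤ c v := (le_div_iff₀ hpos).mp h1
      linarith
    · have h3 : (c ↑i₀ / g i₀) * g ⟨v, hv⟩ ≤ 0 :=
        mul_nonpos_of_nonneg_of_nonpos hrnn hneg
      have := hc v hv
      linarith
  have hc'i₀ : c ↑i₀ - (c ↑i₀ / g i₀) * (if h : (↑i₀ : Euc d) ∈ T then g ⟨↑i₀, h⟩ else 0) = 0 := by
    rw [dif_pos i₀.2, Subtype.coe_eta, div_mul_cancel₀ _ hgi₀.ne', sub_self]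
  have hxc' : x = ∑ v ∈ T,
      (c v - (c ↑i₀ / g i₀) * (if h : v ∈ T then g ⟨v, h⟩ else 0)) • v := by
    rw [hxc, eq_comm]
    calc ∑ v ∈ T, (c v - (c ↑i₀ / g i₀) * (if h : v ∈ T then g ⟨v, h⟩ else 0)) • v
        = ∑ v ∈ T, (c v • v -
            (c ↑i₀ / g i₀) • ((if h : v ∈ T then g ⟨v, h⟩ else 0) • v)) := by
          refine Finset.sum_congr rfl fun v _ => ?_
          rw [sub_smul, smul_smul]
      _ = ∑ v ∈ T, c v • v -
            (c ↑i₀ / g i₀) • ∑ v ∈ T, (if h : v ∈ T then g ⟨v, h⟩ else 0) • v := by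
          rw [Finset.sum_sub_distrib, Finset.smul_sum]
      _ = ∑ v ∈ T, c v • v := by rw [hgext_sum, smul_zero, sub_zero]
  have hxe : x ∈ coneSet (T.erase ↑i₀) := by
    refine ⟨fun v => c v - (c ↑i₀ / g i₀) * (if h : v ∈ T then g ⟨v, h⟩ else 0),
      fun v hv => hc' v (Finset.mem_of_mem_erase hv), ?_⟩
    rw [hxc']
    rw [Finset.sum_erase T
      (f := fun v => (c v - (c ↑i₀ / g i₀) * (if h : v ∈ T then g ⟨v, h⟩ else 0)) • v)
      (by beta_reduce; rw [hc'i₀, zero_smul])]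
  obtain ⟨T', hT'sub, hT'li, hT'mem⟩ :=
    ih (T.erase ↑i₀) (Finset.erase_ssubset i₀.2) x hxe
  exact ⟨T', hT'sub.trans (Finset.erase_subset _ _), hT'li, hT'mem⟩

lemma coneSet_closed_of_li (T : Finset (Euc d))
    (hli : LinearIndependent ℝ (fun i : {v // v ∈ T} => (i : Euc d))) :
    IsClosed (coneSet T) := by
  classical
  let φ : ({v // v ∈ T} → ℝ) →ₗ[ℝ] Euc d :=
    { toFun := fun c => ∑ i : {v // v ∈ T}, c i • (i : Euc d)
      map_add' := by intro a b; simp [add_smul, Finset.sum_add_distrib]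
      map_smul' := by intro m a; simp [smul_smul, Finset.smul_sum] }
  have hker : LinearMap.ker φ = ⊥ := by
    rw [LinearMap.ker_eq_bot']
    intro c hc
    have hc0 : ∑ i, c i • ((fun i : {v // v ∈ T} => (i : Euc d)) i) = 0 := hc
    have := Fintype.linearIndependent_iff.mp hli c hc0
    funext i
    exact this i
  have hemb := LinearMap.isClosedEmbedding_of_injective hker
  have hK : IsClosed {c : {v // v ∈ T} → ℝ | ∀ i, 0 ≤ c i} := by
    have : {c : {v // v ∈ T} → ℝ | ∀ i, 0 ≤ c i} = ⋂ i, {c | 0 ≤ c i} := by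
      ext c; simp [Set.mem_iInter]
    rw [this]
    exact isClosed_iInter fun i => isClosed_le continuous_const (continuous_apply i)
  have himg : coneSet T = φ '' {c : {v // v ∈ T} → ℝ | ∀ i, 0 ≤ c i} := by
    ext x
    constructor
    · rintro ⟨c, hc, rfl⟩
      refine ⟨fun i => c ↑i, fun i => hc _ i.2, ?_⟩
      show ∑ i : {v // v ∈ T}, c ↑i • (↑i : Euc d) = ∑ v ∈ T, c v • v
      rw [Finset.univ_eq_attach]
      exact Finset.sum_attach T (fun v => c v • v)
    · rintro ⟨c, hc, rfl⟩
      refine ⟨fun v => if h : v ∈ T then c ⟨v, h⟩ else 0, fun v hv => ?_, ?_⟩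
      · show (0:ℝ) ≤ if h : v ∈ T then c ⟨v, h⟩ else 0
        rw [dif_pos hv]
        exact hc _
      · show (φ c) = ∑ v ∈ T, (if h : v ∈ T then c ⟨v, h⟩ else 0) • v
        rw [← Finset.sum_attach T (fun v => (if h : v ∈ T then c ⟨v, h⟩ else 0) • v)]
        have heq : ∀ i ∈ T.attach,
            (if h : (↑i : Euc d) ∈ T then c ⟨↑i, h⟩ else 0) • (↑i : Euc d)
              = c i • (↑i : Euc d) := by
          intro i _
          rw [dif_pos i.2, Subtype.coe_eta]
        rw [Finset.sum_congr rfl heq]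
        show ∑ i : {v // v ∈ T}, c i • (i : Euc d) = _
        rw [Finset.univ_eq_attach]
  rw [himg]
  exact hemb.isClosedMap _ hK

lemma posHull_closed (S : Finset (Euc d)) : IsClosed (coneSet S) := by
  classical
  have heq : coneSet S = ⋃ T ∈ S.powerset.filter
      (fun T => LinearIndependent ℝ (fun i : {v // v ∈ T} => (i : Euc d))), coneSet T := by
    ext x
    simp only [Set.mem_iUnion, Finset.mem_filter, Finset.mem_powerset, exists_prop]
    constructor
    · intro hx
      obtain ⟨T', hsub, hli, hmem⟩ := caratheodory S x hx
      exact ⟨T', ⟨hsub, hli⟩, hmem⟩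
    · rintro ⟨T, ⟨hsub, _⟩, hmem⟩
      exact coneSet_mono hsub hmem
  rw [heq]
  exact isClosed_biUnion_finset fun T hT =>
    coneSet_closed_of_li T (Finset.mem_filter.mp hT).2

end Stmt3Aux


/-- every pointed polyhedral cone of dimension `d - j` is the normal cone of a
`j`-face of a polytope contained in the unit cube; in particular every `(d-j-1)`-dimensional
spherical polytope arises as `n(P,F)`. -/
theorem stmt_3 {d : ℕ} (hd : 1 ≤ d) (j : ℕ) (hj : j < d) (C : Set (Euc d))
    (hC : IsPolyhedralCone C) (hpointed : C ∩ (-C) = {0})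
    (hdim : Module.finrank ℝ (Submodule.span ℝ C) = d - j) :
    ∃ P F : Set (Euc d), IsPolytope P ∧ P ⊆ cube d ∧ F ∈ facesOfDim P j ∧
      normalConeOf P F = C ∧ nPF P F = C ∩ Metric.sphere (0 : Euc d) 1 := by
  classical
  obtain ⟨S, hCS⟩ := hC
  have hCcs : C = Stmt3Aux.coneSet S := hCS
  have h0C : (0 : Euc d) ∈ C := by
    rw [hCcs]
    exact ⟨fun _ => 0, fun v _ => le_refl 0, by simp⟩
  have hSC : ∀ v ∈ S, v ∈ C := by
    intro v hv
    rw [hCcs]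
    refine ⟨fun w => if w = v then 1 else 0, fun w _ => ?_, ?_⟩
    · show (0:ℝ) ≤ if w = v then 1 else 0
      split_ifs <;> norm_num
    · have h1 : ∀ w ∈ S, (if w = v then (1:ℝ) else 0) • w = (if w = v then w else 0) := by
        intro w _
        split_ifs with h
        · rw [one_smul]
        · rw [zero_smul]
      rw [Finset.sum_congr rfl h1, Finset.sum_ite_eq' S v (fun w => w), if_pos hv]
  have hspanC : Submodule.span ℝ C = Submodule.span ℝ (S : Set (Euc d)) := by
    apply le_antisymm
    · rw [Submodule.span_le]
      intro u hu
      rw [hCcs] at hu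
      obtain ⟨c, hc, rfl⟩ := hu
      exact Submodule.sum_mem _ fun v hv =>
        Submodule.smul_mem _ _ (Submodule.subset_span hv)
    · exact Submodule.span_mono (fun v hv => hSC v hv)
  set Pt : Set (Euc d) := {x : Euc d | ∀ v ∈ S, ⟪x, v⟫ ≤ 0} with hPtdef
  have hPtC : ∀ x ∈ Pt, ∀ u ∈ C, ⟪x, u⟫ ≤ 0 := by
    intro x hx u hu
    rw [hCcs] at hu
    obtain ⟨c, hc, rfl⟩ := hu
    rw [inner_sum]
    apply Finset.sum_nonpos
    intro v hv
    rw [real_inner_smul_right]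
    exact mul_nonpos_of_nonneg_of_nonpos (hc v hv) (hx v hv)
  set P : Set (Euc d) := Pt ∩ cube d with hPdef
  set F : Set (Euc d) := ((Submodule.span ℝ C)ᗮ : Set (Euc d)) ∩ cube d with hFdef
  have h0cube : (0 : Euc d) ∈ cube d := by
    intro i
    show |(0 : Euc d) i| ≤ 1 / 2
    norm_num
  have h0Pt : (0 : Euc d) ∈ Pt := by
    intro v hv
    rw [inner_zero_left]
  have h0P : (0 : Euc d) ∈ P := ⟨h0Pt, h0cube⟩
  have h0F : (0 : Euc d) ∈ F := ⟨Submodule.zero_mem _, h0cube⟩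
  have hFP : F ⊆ P := by
    rintro x ⟨hx1, hx2⟩
    refine ⟨fun v hv => ?_, hx2⟩
    have hvV : v ∈ Submodule.span ℝ C := Submodule.subset_span (hSC v hv)
    exact le_of_eq ((Submodule.mem_orthogonal' _ x).mp hx1 v hvV)
  have hmemVbot : ∀ z : Euc d, z ∈ (Submodule.span ℝ C)ᗮ ↔ ∀ v ∈ S, ⟪z, v⟫ = 0 := by
    intro z
    rw [hspanC]
    constructor
    · intro hz v hv
      exact (Submodule.mem_orthogonal' _ z).mp hz v (Submodule.subset_span hv)
    · intro h
      rw [Submodule.mem_orthogonal']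
      intro u hu
      have hsub : (S : Set (Euc d)) ⊆ ((ℝ ∙ z)ᗮ : Set (Euc d)) := by
        intro v hv
        rw [SetLike.mem_coe, Submodule.mem_orthogonal_singleton_iff_inner_right]
        exact h v hv
      have hle : Submodule.span ℝ (S : Set (Euc d)) ≤ (ℝ ∙ z)ᗮ :=
        Submodule.span_le.mpr hsub
      have h2 := (Submodule.mem_orthogonal _ u).mp (hle hu) z
        (Submodule.mem_span_singleton_self z)
      exact h2
  have hu₀V : (∑ v ∈ S, v) ∈ Submodule.span ℝ C :=
    Submodule.sum_mem _ fun v hv => Submodule.subset_span (hSC v hv)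
  have hsum_eq : ∀ z ∈ Pt, ⟪z, ∑ v ∈ S, v⟫ = 0 → z ∈ (Submodule.span ℝ C)ᗮ := by
    intro z hz h0
    rw [hmemVbot]
    rw [inner_sum] at h0
    exact fun v hv =>
      (Finset.sum_eq_zero_iff_of_nonpos (fun w hw => hz w hw)).mp h0 v hv
  -- P is a polytope
  have hPt_closed : IsClosed Pt := by
    have heq : Pt = ⋂ v ∈ S, {x : Euc d | ⟪x, (v : Euc d)⟫ ≤ 0} := by
      ext x
      simp only [hPtdef, Set.mem_setOf_eq, Set.mem_iInter]
    rw [heq]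
    exact isClosed_biInter fun v _ =>
      isClosed_le (Continuous.inner continuous_id continuous_const) continuous_const
  have hPcompact : IsCompact P :=
    Stmt3Aux.isCompact_cube.of_isClosed_subset
      (hPt_closed.inter Stmt3Aux.isCompact_cube.isClosed) Set.inter_subset_right
  have hPoly : IsPolytope P := by
    refine Stmt3Aux.isPolytope_of_halfspaces
      (ι := ({v // v ∈ S} ⊕ (Fin d ⊕ Fin d)))
      (u := Sum.elim (fun v => (v : Euc d))
        (Sum.elim (fun i => EuclideanSpace.single i (1 : ℝ))
                  (fun i => -EuclideanSpace.single i (1 : ℝ))))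
      (t := Sum.elim (fun _ => 0) (Sum.elim (fun _ => 1 / 2) (fun _ => 1 / 2)))
      ?_ ⟨0, h0P⟩ hPcompact
    ext x
    constructor
    · rintro ⟨hx1, hx2⟩ i
      rcases i with v | i | i
      · exact hx1 v v.2
      · have := (abs_le.mp (hx2 i)).2
        simpa [EuclideanSpace.inner_single_right] using this
      · have := (abs_le.mp (hx2 i)).1
        rw [Sum.elim_inr, Sum.elim_inr, Sum.elim_inr, Sum.elim_inr, inner_neg_right]
        rw [EuclideanSpace.inner_single_right]
        simp only [map_one, RCLike.star_def, conj_trivial, one_mul]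
        linarith
    · intro hx
      constructor
      · intro v hv
        exact hx (Sum.inl ⟨v, hv⟩)
      · intro i
        have h1 := hx (Sum.inr (Sum.inl i))
        have h2 := hx (Sum.inr (Sum.inr i))
        rw [Sum.elim_inr, Sum.elim_inr, Sum.elim_inl, Sum.elim_inl,
          EuclideanSpace.inner_single_right] at h1
        rw [Sum.elim_inr, Sum.elim_inr, Sum.elim_inr, Sum.elim_inr, inner_neg_right,
          EuclideanSpace.inner_single_right] at h2
        simp only [map_one, RCLike.star_def, conj_trivial, one_mul] at h1 h2
        exact abs_le.mpr ⟨by linarith, h1⟩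
  -- cube is convex
  have hcube_convex : Convex ℝ (cube d) := by
    intro x hx y hy a b ha hb hab
    intro i
    have happ : (a • x + b • y) i = a * x i + b * y i := by
      simp [PiLp.add_apply, PiLp.smul_apply, smul_eq_mul]
    show |(a • x + b • y) i| ≤ 1 / 2
    rw [happ]
    calc |a * x i + b * y i| ≤ |a * x i| + |b * y i| := abs_add_le _ _
      _ = a * |x i| + b * |y i| := by
          rw [abs_mul, abs_mul, abs_of_nonneg ha, abs_of_nonneg hb]
      _ ≤ a * (1 / 2) + b * (1 / 2) :=
          add_le_add (mul_le_mul_of_nonneg_left (hx i) ha)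
            (mul_le_mul_of_nonneg_left (hy i) hb)
      _ = 1 / 2 := by rw [← add_mul, hab, one_mul]
  have hFconv : Convex ℝ F :=
    ((Submodule.span ℝ C)ᗮ.convex).inter hcube_convex
  have hFext : IsExtreme ℝ P F := by
    refine ⟨hFP, ?_⟩
    intro x₁ hx₁ x₂ hx₂ x hxF hseg
    obtain ⟨a, b, ha, hb, hab, hsum⟩ := hseg
    have hfx : ⟪x, ∑ v ∈ S, v⟫ = 0 :=
      (Submodule.mem_orthogonal' _ x).mp hxF.1 _ hu₀V
    have h1 : ⟪x₁, ∑ v ∈ S, v⟫ ≤ 0 := by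
      rw [inner_sum]
      exact Finset.sum_nonpos fun v hv => hx₁.1 v hv
    have h2 : ⟪x₂, ∑ v ∈ S, v⟫ ≤ 0 := by
      rw [inner_sum]
      exact Finset.sum_nonpos fun v hv => hx₂.1 v hv
    have heq : a * ⟪x₁, ∑ v ∈ S, v⟫ + b * ⟪x₂, ∑ v ∈ S, v⟫ = 0 := by
      rw [← real_inner_smul_left, ← real_inner_smul_left, ← inner_add_left, hsum]
      exact hfx
    have h1' : ⟪x₁, ∑ v ∈ S, v⟫ = 0 := by nlinarith
    have h2' : ⟪x₂, ∑ v ∈ S, v⟫ = 0 := by nlinarith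
    exact ⟨hsum_eq x₁ hx₁.1 h1', hx₁.2⟩
  have hFdim : setDim F = j := by
    have hdir : (affineSpan ℝ F).direction = (Submodule.span ℝ C)ᗮ := by
      rw [direction_affineSpan]
      apply le_antisymm
      · rw [vectorSpan_def]
        apply Submodule.span_le.mpr
        rintro w hw
        rw [Set.mem_vsub] at hw
        obtain ⟨y, hy, z, hz, rfl⟩ := hw
        rw [vsub_eq_sub]
        exact Submodule.sub_mem _ hy.1 hz.1
      · intro w hw
        have hccpos : (0 : ℝ) < (2 * ‖w‖ + 1)⁻¹ := by positivity
        have hnorm : ‖(2 * ‖w‖ + 1)⁻¹ • w‖ ≤ 1 / 2 := by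
          rw [norm_smul, Real.norm_eq_abs, abs_of_pos hccpos,
            inv_mul_le_iff₀ (by positivity)]
          have h0w : (0 : ℝ) ≤ ‖w‖ := norm_nonneg w
          linarith
        have hmemF : (2 * ‖w‖ + 1)⁻¹ • w ∈ F :=
          ⟨Submodule.smul_mem _ _ hw, Stmt3Aux.mem_cube_of_norm_le hnorm⟩
        have hsm : (2 * ‖w‖ + 1)⁻¹ • w ∈ vectorSpan ℝ F := by
          rw [vectorSpan_def]
          apply Submodule.subset_span
          rw [Set.mem_vsub]
          exact ⟨_, hmemF, 0, h0F, by rw [vsub_eq_sub, sub_zero]⟩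
        have hsm2 := Submodule.smul_mem (vectorSpan ℝ F) (2 * ‖w‖ + 1) hsm
        rwa [smul_inv_smul₀ (by positivity)] at hsm2
    show Module.finrank ℝ (affineSpan ℝ F).direction = j
    rw [hdir]
    have horth := (Submodule.span ℝ C).finrank_add_finrank_orthogonal
    rw [hdim, finrank_euclideanSpace_fin] at horth
    omega
  -- the normal cone
  have hNC : normalConeOf P F = C := by
    apply Set.Subset.antisymm
    · intro u hu
      have h1 : ∀ z ∈ P, ⟪z, u⟫ ≤ 0 := by
        intro z hz
        have := hu 0 h0F z hz
        simpa using this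
      have h2 : ∀ z ∈ Pt, ⟪z, u⟫ ≤ 0 := by
        intro z hz
        have hccpos : (0 : ℝ) < (2 * ‖z‖ + 1)⁻¹ := by positivity
        have hzc : (2 * ‖z‖ + 1)⁻¹ • z ∈ P := by
          refine ⟨fun v hv => ?_, Stmt3Aux.mem_cube_of_norm_le ?_⟩
          · rw [real_inner_smul_left]
            exact mul_nonpos_of_nonneg_of_nonpos hccpos.le (hz v hv)
          · rw [norm_smul, Real.norm_eq_abs, abs_of_pos hccpos,
              inv_mul_le_iff₀ (by positivity)]
            have h0z : (0 : ℝ) ≤ ‖z‖ := norm_nonneg z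
            linarith
        have h3 := h1 _ hzc
        rw [real_inner_smul_left] at h3
        nlinarith
      have hsmulC : ∀ ⦃cc : ℝ⦄, 0 < cc → ∀ ⦃x : Euc d⦄, x ∈ C → cc • x ∈ C := by
        intro cc hcc x hx
        rw [hCcs] at hx ⊢
        obtain ⟨c, hc, rfl⟩ := hx
        refine ⟨fun v => cc * c v, fun v hv => mul_nonneg hcc.le (hc v hv), ?_⟩
        rw [Finset.smul_sum]
        exact Finset.sum_congr rfl fun v _ => by rw [smul_smul]
      have haddC : ∀ ⦃x : Euc d⦄, x ∈ C → ∀ ⦃y : Euc d⦄, y ∈ C → x + y ∈ C := by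
        intro x hx y hy
        rw [hCcs] at hx hy ⊢
        obtain ⟨c, hc, hx'⟩ := hx
        obtain ⟨c', hc', hy'⟩ := hy
        refine ⟨fun v => c v + c' v, fun v hv => add_nonneg (hc v hv) (hc' v hv), ?_⟩
        rw [hx', hy', ← Finset.sum_add_distrib]
        exact Finset.sum_congr rfl fun v _ => by rw [add_smul]
      by_contra hnot
      have hCconv : Convex ℝ C := by
        intro x hx y hy a b ha hb _
        rw [hCcs] at hx hy ⊢
        obtain ⟨c, hc, rfl⟩ := hx
        obtain ⟨c', hc', rfl⟩ := hy
        refine ⟨fun v => a * c v + b * c' v, fun v hv =>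
          add_nonneg (mul_nonneg ha (hc v hv)) (mul_nonneg hb (hc' v hv)), ?_⟩
        rw [Finset.smul_sum, Finset.smul_sum, ← Finset.sum_add_distrib]
        exact Finset.sum_congr rfl fun v _ => by rw [add_smul, smul_smul, smul_smul]
      have hCclosed : IsClosed C := by rw [hCcs]; exact Stmt3Aux.posHull_closed S
      obtain ⟨f, r, hf, hr⟩ := geometric_hahn_banach_closed_point hCconv hCclosed hnot
      have hr0 : 0 < r := by simpa using hf 0 h0C
      have hfle : ∀ a ∈ C, f a ≤ 0 := by
        intro a ha
        by_contra hpos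
        push_neg at hpos
        have := hf ((r / f a) • a) (hsmulC (div_pos hr0 hpos) ha)
        rw [map_smul, smul_eq_mul, div_mul_cancel₀ _ hpos.ne'] at this
        exact lt_irrefl _ this
      set z := (InnerProductSpace.toDual ℝ (Euc d)).symm f with hz
      have hzf : ∀ w, ⟪z, w⟫ = f w := fun w => InnerProductSpace.toDual_symm_apply
      have hzPt : z ∈ Pt := fun v hv => by rw [hzf]; exact hfle v (hSC v hv)
      have := h2 z hzPt
      rw [hzf] at this
      linarith
    · intro u hu y hyF z hzP
      have hy0 : ⟪y, u⟫ = 0 :=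
        (Submodule.mem_orthogonal' _ y).mp hyF.1 u (Submodule.subset_span hu)
      rw [hy0]
      exact hPtC z hzP.1 u hu
  refine ⟨P, F, hPoly, Set.inter_subset_right, ⟨⟨⟨0, h0F⟩, hFconv, hFext⟩, hFdim⟩, hNC, ?_⟩
  show normalConeOf P F ∩ Metric.sphere (0 : Euc d) 1 = C ∩ Metric.sphere (0 : Euc d) 1
  rw [hNC]
end

section
/- For all polytopes P, Q ⊆ ℝ^d, the set of translation vectors x ∈ ℝ^d for which P and Q+x are not in mutual general position has Lebesgue measure zero. -/
open MeasureTheory Set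
open scoped RealInnerProductSpace Pointwise Classical

noncomputable section
variable {d : ℕ}

namespace Stmt18Aux

lemma mem_shiftSet {x z : Euc d} {A : Set (Euc d)} : z ∈ shiftSet x A ↔ z - x ∈ A := by
  constructor
  · rintro ⟨a, ha, rfl⟩; simpa using ha
  · intro h; exact ⟨z - x, h, by simp⟩

lemma shiftSet_neg_shiftSet (x : Euc d) (A : Set (Euc d)) :
    shiftSet (-x) (shiftSet x A) = A := by
  ext z; simp [mem_shiftSet, sub_neg_eq_add, sub_add_cancel]

lemma shiftSet_shiftSet_neg (x : Euc d) (A : Set (Euc d)) :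
    shiftSet x (shiftSet (-x) A) = A := by
  ext z; simp [mem_shiftSet, sub_neg_eq_add, sub_add_cancel]

lemma shiftSet_eq_image_vadd (x : Euc d) (A : Set (Euc d)) :
    shiftSet x A = (fun y => x +ᵥ y) '' A :=
  Set.image_congr fun a _ => add_comm a x

lemma convex_shiftSet {A : Set (Euc d)} (hA : Convex ℝ A) (x : Euc d) :
    Convex ℝ (shiftSet x A) := by
  rw [shiftSet_eq_image_vadd]; exact hA.translate x

lemma isClosed_shiftSet {A : Set (Euc d)} (hA : IsClosed A) (x : Euc d) :
    IsClosed (shiftSet x A) :=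
  (Homeomorph.addRight x).isClosedMap A hA

lemma nonempty_shiftSet {A : Set (Euc d)} (hA : A.Nonempty) (x : Euc d) :
    (shiftSet x A).Nonempty := hA.image _

lemma openSegment_sub {y w z x : Euc d} (h : z ∈ openSegment ℝ y w) :
    z - x ∈ openSegment ℝ (y - x) (w - x) := by
  obtain ⟨a, b, ha, hb, hab, rfl⟩ := h
  refine ⟨a, b, ha, hb, hab, ?_⟩
  have : a • (y - x) + b • (w - x) = a • y + b • w - (a + b) • x := by module
  rw [this, hab, one_smul]

lemma isExtreme_shiftSet {C D : Set (Euc d)} (h : IsExtreme ℝ C D) (x : Euc d) :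
    IsExtreme ℝ (shiftSet x C) (shiftSet x D) := by
  constructor
  · exact Set.image_mono h.1
  · intro x₁ hx₁ x₂ hx₂ g hg hseg
    rw [mem_shiftSet] at hx₁ hx₂ hg
    have := h.2 hx₁ hx₂ hg (openSegment_sub hseg)
    exact mem_shiftSet.2 this

lemma affineSpan_shiftSet (x : Euc d) (A : Set (Euc d)) :
    affineSpan ℝ (shiftSet x A)
      = (affineSpan ℝ A).map (AffineEquiv.constVAdd ℝ (Euc d) x).toAffineMap := by
  rw [AffineSubspace.map_span, shiftSet_eq_image_vadd]
  rfl

lemma direction_affineSpan_shiftSet (x : Euc d) (A : Set (Euc d)) :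
    (affineSpan ℝ (shiftSet x A)).direction = (affineSpan ℝ A).direction := by
  rw [affineSpan_shiftSet, AffineSubspace.map_direction]
  have : (AffineEquiv.constVAdd ℝ (Euc d) x).toAffineMap.linear = LinearMap.id := rfl
  rw [this, Submodule.map_id]

lemma setDim_shiftSet (x : Euc d) (A : Set (Euc d)) :
    setDim (shiftSet x A) = setDim A := by
  unfold setDim; rw [direction_affineSpan_shiftSet]

lemma mem_affineSpan_shiftSet_iff {x z : Euc d} {A : Set (Euc d)} :
    z ∈ affineSpan ℝ (shiftSet x A) ↔ z - x ∈ affineSpan ℝ A := by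
  rw [affineSpan_shiftSet, AffineSubspace.mem_map]
  constructor
  · rintro ⟨y, hy, rfl⟩
    show x + y - x ∈ _
    simpa [AffineEquiv.constVAdd, add_comm, add_sub_cancel_right] using hy
  · intro h
    exact ⟨z - x, h, by show x + (z - x) = z; abel⟩

lemma intrinsicInterior_shiftSet (x : Euc d) (A : Set (Euc d)) :
    intrinsicInterior ℝ (shiftSet x A) = shiftSet x (intrinsicInterior ℝ A) := by
  have h1 : shiftSet x A
      = (AffineIsometryEquiv.constVAdd ℝ (Euc d) x).toAffineIsometry '' A := by
    rw [shiftSet_eq_image_vadd]; rfl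
  have h2 : shiftSet x (intrinsicInterior ℝ A)
      = (AffineIsometryEquiv.constVAdd ℝ (Euc d) x).toAffineIsometry
        '' (intrinsicInterior ℝ A) := by
    rw [shiftSet_eq_image_vadd]; rfl
  rw [h1, h2, AffineIsometry.image_intrinsicInterior]



lemma mem_intrinsicInterior_iff' {s : Set (Euc d)} {z : Euc d} :
    z ∈ intrinsicInterior ℝ s ↔
      z ∈ s ∧ ∃ ε > (0:ℝ), ∀ y ∈ affineSpan ℝ s, dist y z < ε → y ∈ s := by
  constructor
  · intro hz
    refine ⟨intrinsicInterior_subset hz, ?_⟩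
    obtain ⟨y, hy, rfl⟩ := mem_intrinsicInterior.1 hz
    rw [mem_interior_iff_mem_nhds, Metric.mem_nhds_iff] at hy
    obtain ⟨ε, hε, hball⟩ := hy
    refine ⟨ε, hε, fun q hq hdist => ?_⟩
    have : (⟨q, hq⟩ : affineSpan ℝ s) ∈ Metric.ball y ε := by
      rw [Metric.mem_ball, Subtype.dist_eq]; exact hdist
    exact hball this
  · rintro ⟨hzs, ε, hε, h⟩
    have hzspan : z ∈ affineSpan ℝ s := subset_affineSpan ℝ s hzs
    refine mem_intrinsicInterior.2 ⟨⟨z, hzspan⟩, ?_, rfl⟩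
    rw [mem_interior_iff_mem_nhds, Metric.mem_nhds_iff]
    refine ⟨ε, hε, fun q hq => ?_⟩
    rw [Metric.mem_ball, Subtype.dist_eq] at hq
    exact h q q.2 hq

lemma openSegment_subset_intrinsicInterior {s : Set (Euc d)} (hs : Convex ℝ s)
    {p w : Euc d} (hp : p ∈ intrinsicInterior ℝ s) (hw : w ∈ s) :
    openSegment ℝ p w ⊆ intrinsicInterior ℝ s := by
  rintro q ⟨a, b, ha, hb, hab, rfl⟩
  obtain ⟨hps, ε, hε, hball⟩ := mem_intrinsicInterior_iff'.1 hp
  have hqs : a • p + b • w ∈ s := hs hps hw ha.le hb.le hab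
  refine mem_intrinsicInterior_iff'.2 ⟨hqs, a * ε, by positivity, fun y hy hdist => ?_⟩
  set q := a • p + b • w with hq
  set p' := a⁻¹ • (y -ᵥ q) +ᵥ p with hp'
  have hp'span : p' ∈ affineSpan ℝ s :=
    AffineSubspace.smul_vsub_vadd_mem _ a⁻¹ hy (subset_affineSpan ℝ s hqs)
      (subset_affineSpan ℝ s hps)
  have hdist' : dist p' p < ε := by
    have : p' - p = a⁻¹ • (y - q) := by simp [hp']
    rw [dist_eq_norm, this, norm_smul, Real.norm_eq_abs, abs_of_pos (by positivity)]
    calc a⁻¹ * ‖y - q‖ = a⁻¹ * dist y q := by rw [dist_eq_norm]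
    _ < a⁻¹ * (a * ε) := by
        apply mul_lt_mul_of_pos_left hdist (by positivity)
    _ = ε := by field_simp
  have hp's : p' ∈ s := hball p' hp'span hdist'
  have hy' : y = a • p' + b • w := by
    have : a • p' = (y - q) + a • p := by
      rw [hp']; rw [vadd_eq_add, smul_add, smul_smul, mul_inv_cancel₀ ha.ne', one_smul]; rfl
    rw [this, hq]; abel
  rw [hy']
  exact hs hp's hw ha.le hb.le hab

/-- If a relatively open metric ball piece of an affine subspace is inside `F`,
then the subspace is inside the affine span of `F`. -/
lemma le_affineSpan_of_ball_subset {M : AffineSubspace ℝ (Euc d)} {F : Set (Euc d)}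
    {z : Euc d} {ε : ℝ} (hz : z ∈ M) (hε : 0 < ε)
    (h : ∀ y ∈ M, dist y z < ε → y ∈ F) : M ≤ affineSpan ℝ F := by
  intro y hy
  have hzF : z ∈ F := h z hz (by simpa using hε)
  by_cases hyz : y = z
  · exact hyz ▸ subset_affineSpan ℝ F hzF
  · have hr : (0:ℝ) < dist y z := dist_pos.2 hyz
    set δ : ℝ := ε / (2 * dist y z) with hδdef
    have hδ : 0 < δ := by positivity
    set z' := δ • (y -ᵥ z) +ᵥ z with hz'def
    have hz'M : z' ∈ M := AffineSubspace.smul_vsub_vadd_mem _ δ hy hz hz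
    have hz'dist : dist z' z < ε := by
      have : z' - z = δ • (y - z) := by simp [hz'def]
      rw [dist_eq_norm, this, norm_smul, Real.norm_eq_abs, abs_of_pos hδ, hδdef]
      rw [← dist_eq_norm]
      have : ε / (2 * dist y z) * dist y z = ε / 2 := by field_simp
      rw [this]; linarith
    have hz'F : z' ∈ F := h z' hz'M hz'dist
    have : y = δ⁻¹ • (z' -ᵥ z) +ᵥ z := by
      rw [hz'def]
      simp only [vadd_eq_add, vsub_eq_sub, add_sub_cancel_right, smul_smul,
        inv_mul_cancel₀ hδ.ne', one_smul]
      abel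
    rw [this]
    exact AffineSubspace.smul_vsub_vadd_mem _ δ⁻¹ (subset_affineSpan ℝ F hz'F)
      (subset_affineSpan ℝ F hzF) (subset_affineSpan ℝ F hzF)



/-- The minimal face of a convex set `C` at a point `z`. -/
def minFace (C : Set (Euc d)) (z : Euc d) : Set (Euc d) :=
  {y | y ∈ C ∧ ∃ w ∈ C, z ∈ openSegment ℝ y w}

lemma mem_minFace_self {C : Set (Euc d)} {z : Euc d} (hz : z ∈ C) : z ∈ minFace C z :=
  ⟨hz, z, hz, by rw [openSegment_same]; exact rfl⟩

lemma minFace_subset {C : Set (Euc d)} {z : Euc d} : minFace C z ⊆ C := fun _ hy => hy.1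

lemma minFace_witness_mem {C : Set (Euc d)} {z y w : Euc d} (hy : y ∈ C) (hw : w ∈ C)
    (h : z ∈ openSegment ℝ y w) : w ∈ minFace C z :=
  ⟨hw, y, hy, by rwa [openSegment_symm]⟩

lemma minFace_convex {C : Set (Euc d)} {z : Euc d} (hC : Convex ℝ C) :
    Convex ℝ (minFace C z) := by
  rintro y₁ ⟨hy₁, w₁, hw₁, a₁, b₁, ha₁, hb₁, hab₁, h₁⟩
    y₂ ⟨hy₂, w₂, hw₂, a₂, b₂, ha₂, hb₂, hab₂, h₂⟩ t u ht hu htu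
  refine ⟨hC hy₁ hy₂ ht hu htu, ?_⟩
  have ha₁' : a₁ < 1 := by linarith
  have ha₂' : a₂ < 1 := by linarith
  have hs1 : 1 < t / a₁ + u / a₂ := by
    rcases lt_or_eq_of_le ht with ht' | ht'
    · have h1 : t < t / a₁ := by
        rw [lt_div_iff₀ ha₁]; nlinarith
      have h2 : u ≤ u / a₂ := by
        rw [le_div_iff₀ ha₂]; nlinarith
      linarith
    · have ht0 : t = 0 := ht'.symm
      have hu1 : u = 1 := by linarith
      rw [ht0, hu1]
      rw [zero_div, zero_add, lt_div_iff₀ ha₂]; linarith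
  have hspos : (0:ℝ) < t / a₁ + u / a₂ := by linarith
  have hsne : t / a₁ + u / a₂ - 1 ≠ 0 := by linarith
  have hc₁0 : 0 ≤ t * b₁ / a₁ := div_nonneg (by positivity) ha₁.le
  have hc₂0 : 0 ≤ u * b₂ / a₂ := div_nonneg (by positivity) ha₂.le
  have hcsum : t * b₁ / a₁ + u * b₂ / a₂ = (t / a₁ + u / a₂) - 1 := by
    rw [show b₁ = 1 - a₁ by linarith, show b₂ = 1 - a₂ by linarith,
      show u = 1 - t by linarith]
    field_simp
    ring
  set V : Euc d := (t * b₁ / a₁) • w₁ + (u * b₂ / a₂) • w₂ with hV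
  have hwC : ((t / a₁ + u / a₂ - 1)⁻¹ • V) ∈ C := by
    have h1 : (t / a₁ + u / a₂ - 1)⁻¹ • V
        = (t * b₁ / a₁ / (t / a₁ + u / a₂ - 1)) • w₁
          + (u * b₂ / a₂ / (t / a₁ + u / a₂ - 1)) • w₂ := by
      rw [hV, smul_add, smul_smul, smul_smul]
      ring_nf
    rw [h1]
    refine hC hw₁ hw₂ (div_nonneg hc₁0 (by linarith)) (div_nonneg hc₂0 (by linarith)) ?_
    rw [← add_div, hcsum]
    exact div_self hsne
  refine ⟨(t / a₁ + u / a₂ - 1)⁻¹ • V, hwC, 1/(t / a₁ + u / a₂),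
    1 - 1/(t / a₁ + u / a₂), by positivity, ?_, by ring, ?_⟩
  · have : 1/(t / a₁ + u / a₂) < 1 := by rw [div_lt_one hspos]; linarith
    linarith
  · have key : (t/a₁) • (a₁ • y₁ + b₁ • w₁) + (u/a₂) • (a₂ • y₂ + b₂ • w₂)
        = (t/a₁ + u/a₂) • z := by rw [h₁, h₂, add_smul]
    have expand : t • y₁ + u • y₂ + V = (t / a₁ + u / a₂) • z := by
      rw [← key, hV]
      match_scalars
      · field_simp
      · field_simp
      · field_simp
      · field_simp
    have h2 : (1 - 1/(t / a₁ + u / a₂)) • ((t / a₁ + u / a₂ - 1)⁻¹ • V)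
        = (1/(t / a₁ + u / a₂)) • V := by
      rw [smul_smul]
      congr 1
      generalize hsg : t / a₁ + u / a₂ = sS at hs1 hspos hsne
      field_simp
    rw [h2, ← smul_add, show (1:ℝ)/(t / a₁ + u / a₂) = (t / a₁ + u / a₂)⁻¹ from one_div _,
      show t • y₁ + u • y₂ + V = (t / a₁ + u / a₂) • z from expand, smul_smul,
      inv_mul_cancel₀ hspos.ne', one_smul]
private lemma extreme_step {C : Set (Euc d)} (hC : Convex ℝ C) {x₁ x₂ w g z : Euc d}
    (hx₂ : x₂ ∈ C) (hw : w ∈ C) (hg : g ∈ openSegment ℝ x₁ x₂)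
    (hz : z ∈ openSegment ℝ g w) : ∃ w' ∈ C, z ∈ openSegment ℝ x₁ w' := by
  obtain ⟨c, e, hc, he, hce, hgeq⟩ := hg
  obtain ⟨a, b, ha, hb, hab, hzeq⟩ := hz
  have hac : 0 < a * c := by positivity
  have hac1 : a * c < 1 := by nlinarith
  set w' : Euc d := (1 - a*c)⁻¹ • ((a*e) • x₂ + b • w) with hw'
  have hw'C : w' ∈ C := by
    have h1 : w' = (a*e/(1-a*c)) • x₂ + (b/(1-a*c)) • w := by
      rw [hw', smul_add, smul_smul, smul_smul]; ring_nf
    rw [h1]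
    refine hC hx₂ hw (div_nonneg (by positivity) (by linarith)) (div_nonneg hb.le (by linarith)) ?_
    rw [← add_div, div_eq_one_iff_eq (by linarith)]
    nlinarith
  refine ⟨w', hw'C, a*c, 1 - a*c, hac, by linarith, by ring, ?_⟩
  rw [hw', smul_smul, mul_inv_cancel₀ (by linarith : (1:ℝ) - a*c ≠ 0), one_smul]
  rw [← hzeq, ← hgeq]
  module

lemma minFace_isExtreme {C : Set (Euc d)} {z : Euc d} (hC : Convex ℝ C) :
    IsExtreme ℝ C (minFace C z) := by
  refine ⟨minFace_subset, ?_⟩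
  intro x₁ hx₁ x₂ hx₂ g hg hseg
  obtain ⟨hgC, w, hwC, hzw⟩ := hg
  obtain ⟨w', hw', hz'⟩ := extreme_step hC hx₂ hwC hseg hzw
  exact ⟨hx₁, w', hw', hz'⟩

lemma mem_intrinsicInterior_minFace {C : Set (Euc d)} {z : Euc d} (hC : Convex ℝ C)
    (hz : z ∈ C) : z ∈ intrinsicInterior ℝ (minFace C z) := by
  have hGconv : Convex ℝ (minFace C z) := minFace_convex hC
  have hGne : (minFace C z).Nonempty := ⟨z, mem_minFace_self hz⟩
  obtain ⟨p, hp⟩ := hGne.intrinsicInterior hGconv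
  obtain ⟨hpC, w, hwC, hzpw⟩ := intrinsicInterior_subset hp
  have hwG : w ∈ minFace C z := minFace_witness_mem hpC hwC hzpw
  exact openSegment_subset_intrinsicInterior hGconv hp hwG hzpw


lemma face_eq_minFace {C F : Set (Euc d)} {z : Euc d}
    (hF : IsExtreme ℝ C F) (hzF : z ∈ intrinsicInterior ℝ F) : F = minFace C z := by
  obtain ⟨hzF', ε, hε, hball⟩ := mem_intrinsicInterior_iff'.1 hzF
  have hzC : z ∈ C := hF.1 hzF'
  apply Set.Subset.antisymm
  · intro y hy
    by_cases hyz : y = z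
    · rw [hyz]; exact mem_minFace_self hzC
    · have hr : (0:ℝ) < dist z y := dist_pos.2 (fun h => hyz h.symm)
      set δ : ℝ := ε / (2 * dist z y) with hδdef
      have hδ : 0 < δ := by positivity
      set w : Euc d := δ • (z -ᵥ y) +ᵥ z with hwdef
      have hwspan : w ∈ affineSpan ℝ F :=
        AffineSubspace.smul_vsub_vadd_mem _ δ (subset_affineSpan ℝ F hzF')
          (subset_affineSpan ℝ F hy) (subset_affineSpan ℝ F hzF')
      have hwdist : dist w z < ε := by
        have h1 : w - z = δ • (z - y) := by simp [hwdef]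
        rw [dist_eq_norm, h1, norm_smul, Real.norm_eq_abs, abs_of_pos hδ, ← dist_eq_norm,
          hδdef]
        have : ε / (2 * dist z y) * dist z y = ε / 2 := by field_simp
        rw [this]; linarith
      have hwF : w ∈ F := hball w hwspan hwdist
      refine ⟨hF.1 hy, w, hF.1 hwF, δ/(1+δ), 1/(1+δ), by positivity, by positivity,
        by field_simp; ring, ?_⟩
      rw [hwdef]
      simp only [vsub_eq_sub, vadd_eq_add]
      match_scalars
      · field_simp; ring
      · field_simp; ring
  · rintro y ⟨hyC, w, hwC, hseg⟩
    exact hF.2 hyC hwC hzF' hseg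

private lemma seg_shrink {y w₁ z : Euc d} {a₁ b₁ a : ℝ} (ha₁ : 0 < a₁) (hb₁ : 0 < b₁)
    (hab₁ : a₁ + b₁ = 1) (h : a₁ • y + b₁ • w₁ = z) (ha : 0 < a) (haa : a ≤ a₁) :
    ∃ t : ℝ, 0 ≤ t ∧ t ≤ 1 ∧ a • y + (1-a) • (t • z + (1-t) • w₁) = z := by
  have ha₁1 : a₁ < 1 := by linarith
  have h1a : 0 < 1 - a := by linarith
  refine ⟨(a₁ - a)/(a₁*(1-a)), div_nonneg (by linarith) (by positivity), ?_, ?_⟩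
  · rw [div_le_one (by positivity)]
    nlinarith
  · have hb₁' : b₁ = 1 - a₁ := by linarith
    subst hb₁'
    rw [← h]
    match_scalars
    · field_simp
      ring
    · field_simp
      ring

lemma minFace_inter {P Q' : Set (Euc d)} {z : Euc d} (hP : Convex ℝ P) (hQ : Convex ℝ Q')
    (hzP : z ∈ P) (hzQ : z ∈ Q') :
    minFace (P ∩ Q') z = minFace P z ∩ minFace Q' z := by
  apply Set.Subset.antisymm
  · rintro y ⟨hy, w, hw, hseg⟩
    exact ⟨⟨hy.1, w, hw.1, hseg⟩, ⟨hy.2, w, hw.2, hseg⟩⟩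
  · rintro y ⟨⟨hyP, w₁, hw₁, a₁, b₁, ha₁, hb₁, hab₁, h₁⟩,
      ⟨hyQ, w₂, hw₂, a₂, b₂, ha₂, hb₂, hab₂, h₂⟩⟩
    have ha : 0 < min a₁ a₂ := lt_min ha₁ ha₂
    obtain ⟨t₁, ht₁0, ht₁1, hkey₁⟩ := seg_shrink ha₁ hb₁ hab₁ h₁ ha (min_le_left _ _)
    obtain ⟨t₂, ht₂0, ht₂1, hkey₂⟩ := seg_shrink ha₂ hb₂ hab₂ h₂ ha (min_le_right _ _)
    have ha1 : min a₁ a₂ < 1 := lt_of_le_of_lt (min_le_left _ _) (by linarith)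
    set w := t₁ • z + (1-t₁) • w₁ with hwdef
    set w' := t₂ • z + (1-t₂) • w₂ with hw'def
    have hwP : w ∈ P := hP hzP hw₁ ht₁0 (by linarith) (by ring)
    have hw'Q : w' ∈ Q' := hQ hzQ hw₂ ht₂0 (by linarith) (by ring)
    have hww' : w = w' := by
      have h3 : (1 - min a₁ a₂) • w = (1 - min a₁ a₂) • w' := by
        have := hkey₁.trans hkey₂.symm
        exact add_left_cancel this
      exact smul_right_injective (Euc d) (sub_pos.2 ha1).ne' h3
    refine ⟨⟨hyP, hyQ⟩, w, ⟨hwP, hww' ▸ hw'Q⟩, min a₁ a₂, 1 - min a₁ a₂, ha,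
      by linarith, by ring, hkey₁⟩

/-- A face of a polytope is the convex hull of the vertices it contains. -/
lemma face_eq_convexHull_inter {S : Finset (Euc d)} {F : Set (Euc d)}
    (hFc : Convex ℝ F) (hF : IsExtreme ℝ (convexHull ℝ (↑S : Set (Euc d))) F) :
    F = convexHull ℝ ((↑S : Set (Euc d)) ∩ F) := by
  apply Set.Subset.antisymm
  · intro p hp
    have hp' : p ∈ convexHull ℝ (↑S : Set (Euc d)) := hF.1 hp
    rw [Finset.convexHull_eq] at hp'
    obtain ⟨w, hw0, hw1, hcm⟩ := hp'
    have key : ∀ y ∈ S, 0 < w y → y ∈ F := by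
      intro y₀ hy₀ hpos
      by_cases hc : w y₀ = 1
      · have hzero : ∀ y ∈ S.erase y₀, w y = 0 := by
          have hsum : ∑ y ∈ S.erase y₀, w y = 0 := by
            have := Finset.add_sum_erase S w hy₀
            rw [hw1] at this
            linarith [this]
          intro y hy
          exact (Finset.sum_eq_zero_iff_of_nonneg
            (fun i hi => hw0 i (Finset.mem_of_mem_erase hi))).1 hsum y hy
        have hpy : p = y₀ := by
          rw [← hcm, Finset.centerMass_eq_of_sum_1 _ _ hw1]
          simp only [id_eq]
          rw [← Finset.add_sum_erase S (fun y => w y • y) hy₀]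
          rw [Finset.sum_eq_zero (fun y hy => by rw [hzero y hy, zero_smul]), add_zero,
            hc, one_smul]
        exact hpy ▸ hp
      · have hc1 : w y₀ < 1 := by
          rcases lt_or_eq_of_le (by
            calc w y₀ ≤ ∑ y ∈ S, w y := Finset.single_le_sum hw0 hy₀
            _ = 1 := hw1) with h | h
          · exact h
          · exact absurd h hc
        have hsum_erase : ∑ y ∈ S.erase y₀, w y = 1 - w y₀ := by
          have := Finset.add_sum_erase S w hy₀
          rw [hw1] at this
          linarith [this]
        set q := (S.erase y₀).centerMass w id with hq
        have hqS : q ∈ convexHull ℝ (↑S : Set (Euc d)) := by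
          apply Finset.centerMass_mem_convexHull _
            (fun i hi => hw0 i (Finset.mem_of_mem_erase hi))
            (by rw [hsum_erase]; linarith)
          intro i hi
          exact Finset.mem_coe.2 (Finset.mem_of_mem_erase hi)
        have hsplit : p = w y₀ • y₀ + (1 - w y₀) • q := by
          have hqv : (1 - w y₀) • q = ∑ y ∈ S.erase y₀, w y • y := by
            rw [hq, Finset.centerMass, hsum_erase, smul_smul,
              mul_inv_cancel₀ (by linarith), one_smul]
            rfl
          rw [hqv, ← hcm, Finset.centerMass_eq_of_sum_1 _ _ hw1]
          simp only [id_eq]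
          rw [← Finset.add_sum_erase S (fun y => w y • y) hy₀]
        have hopen : p ∈ openSegment ℝ y₀ q :=
          ⟨w y₀, 1 - w y₀, hpos, by linarith, by ring, hsplit.symm⟩
        exact (hF.2 (subset_convexHull ℝ (↑S : Set (Euc d)) (Finset.mem_coe.2 hy₀))
          hqS hp hopen)
    rw [← hcm, ← Finset.centerMass_filter_ne_zero]
    apply Finset.centerMass_mem_convexHull _
      (fun i hi => hw0 i (Finset.mem_filter.1 hi).1)
    · rw [Finset.sum_filter_ne_zero, hw1]
      exact one_pos
    · intro i hi
      obtain ⟨hiS, hine⟩ := Finset.mem_filter.1 hi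
      exact ⟨Finset.mem_coe.2 hiS, key i hiS (lt_of_le_of_ne (hw0 i hiS) (Ne.symm hine))⟩
  · exact convexHull_min Set.inter_subset_right hFc

lemma good_mutualGenPos (S S' : Finset (Euc d)) (x : Euc d)
    (hgood : ∀ T T' : Finset (Euc d), T ⊆ S → T' ⊆ S' →
      (affineSpan ℝ (↑T : Set (Euc d))).direction
          ⊔ (affineSpan ℝ (↑T' : Set (Euc d))).direction ≠ ⊤ →
      ∀ a ∈ affineSpan ℝ (↑T : Set (Euc d)), ∀ b ∈ affineSpan ℝ (↑T' : Set (Euc d)),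
        x ≠ a - b) :
    MutualGenPos (convexHull ℝ (↑S : Set (Euc d)))
      (shiftSet x (convexHull ℝ (↑S' : Set (Euc d)))) := by
  set P : Set (Euc d) := convexHull ℝ (↑S : Set (Euc d)) with hPdef
  set Q' : Set (Euc d) := shiftSet x (convexHull ℝ (↑S' : Set (Euc d))) with hQdef
  right
  intro j hjd F hF
  obtain ⟨⟨hFne, hFconv, hFext⟩, hFdim⟩ := hF
  obtain ⟨z, hz⟩ := hFne.intrinsicInterior hFconv
  have hzF : z ∈ F := intrinsicInterior_subset hz
  have hzPQ : z ∈ P ∩ Q' := hFext.1 hzF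
  have hPconv : Convex ℝ P := convex_convexHull ℝ _
  have hQconv : Convex ℝ Q' := convex_shiftSet (convex_convexHull ℝ _) x
  set G : Set (Euc d) := minFace P z with hGdef
  set H : Set (Euc d) := minFace Q' z with hHdef
  have hFeq : F = G ∩ H := by
    rw [face_eq_minFace hFext hz, minFace_inter hPconv hQconv hzPQ.1 hzPQ.2]
  have hzG : z ∈ intrinsicInterior ℝ G := mem_intrinsicInterior_minFace hPconv hzPQ.1
  have hzH : z ∈ intrinsicInterior ℝ H := mem_intrinsicInterior_minFace hQconv hzPQ.2
  have hGext : IsExtreme ℝ P G := minFace_isExtreme hPconv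
  have hHext : IsExtreme ℝ Q' H := minFace_isExtreme hQconv
  have hGconv : Convex ℝ G := minFace_convex hPconv
  have hHconv : Convex ℝ H := minFace_convex hQconv
  have hGne : G.Nonempty := ⟨z, mem_minFace_self hzPQ.1⟩
  have hHne : H.Nonempty := ⟨z, mem_minFace_self hzPQ.2⟩
  -- vertex subsets
  set T : Finset (Euc d) := S.filter (· ∈ G) with hTdef
  have hTcoe : (↑T : Set (Euc d)) = (↑S : Set (Euc d)) ∩ G := by
    ext v; simp [hTdef]
  have hGhull : G = convexHull ℝ (↑T : Set (Euc d)) := by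
    rw [hTcoe]; exact face_eq_convexHull_inter hGconv hGext
  set H₀ : Set (Euc d) := shiftSet (-x) H with hH₀def
  have hH' : H = shiftSet x H₀ := (shiftSet_shiftSet_neg x H).symm
  have hH₀ext : IsExtreme ℝ (convexHull ℝ (↑S' : Set (Euc d))) H₀ := by
    have h1 : shiftSet (-x) Q' = convexHull ℝ (↑S' : Set (Euc d)) := by
      rw [hQdef, shiftSet_neg_shiftSet]
    exact h1 ▸ isExtreme_shiftSet hHext (-x)
  have hH₀conv : Convex ℝ H₀ := convex_shiftSet hHconv (-x)
  set T' : Finset (Euc d) := S'.filter (· ∈ H₀) with hT'def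
  have hT'coe : (↑T' : Set (Euc d)) = (↑S' : Set (Euc d)) ∩ H₀ := by
    ext v; simp [hT'def]
  have hH₀hull : H₀ = convexHull ℝ (↑T' : Set (Euc d)) := by
    rw [hT'coe]; exact face_eq_convexHull_inter hH₀conv hH₀ext
  -- affine spans
  have hGspan : affineSpan ℝ G = affineSpan ℝ (↑T : Set (Euc d)) := by
    rw [hGhull, affineSpan_convexHull]
  have hH₀span : affineSpan ℝ H₀ = affineSpan ℝ (↑T' : Set (Euc d)) := by
    rw [hH₀hull, affineSpan_convexHull]
  have hzG' : z ∈ G := intrinsicInterior_subset hzG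
  have hzH' : z ∈ H := intrinsicInterior_subset hzH
  have hzGspan : z ∈ affineSpan ℝ G := subset_affineSpan ℝ G hzG'
  have hzHspan : z ∈ affineSpan ℝ H := subset_affineSpan ℝ H hzH'
  -- genericity
  have hsup : (affineSpan ℝ (↑T : Set (Euc d))).direction
      ⊔ (affineSpan ℝ (↑T' : Set (Euc d))).direction = ⊤ := by
    by_contra hne
    have h1 : z ∈ affineSpan ℝ (↑T : Set (Euc d)) := hGspan ▸ hzGspan
    have h2 : z - x ∈ affineSpan ℝ (↑T' : Set (Euc d)) := by
      rw [← hH₀span]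
      exact subset_affineSpan ℝ H₀ (mem_shiftSet.1 (hH' ▸ hzH'))
    exact hgood T T' (Finset.filter_subset _ _) (Finset.filter_subset _ _) hne z h1
      (z - x) h2 (by abel)
  have hdirH : (affineSpan ℝ H).direction = (affineSpan ℝ (↑T' : Set (Euc d))).direction := by
    rw [hH', direction_affineSpan_shiftSet, hH₀span]
  have hsupGH : (affineSpan ℝ G).direction ⊔ (affineSpan ℝ H).direction = ⊤ := by
    rw [hGspan, hdirH, hsup]
  -- span of F is the intersection of the spans
  obtain ⟨_, ε₁, hε₁, hball₁⟩ := mem_intrinsicInterior_iff'.1 hzG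
  obtain ⟨_, ε₂, hε₂, hball₂⟩ := mem_intrinsicInterior_iff'.1 hzH
  have hspanF : affineSpan ℝ F = affineSpan ℝ G ⊓ affineSpan ℝ H := by
    apply le_antisymm
    · exact le_inf (affineSpan_mono ℝ (hFeq ▸ Set.inter_subset_left))
        (affineSpan_mono ℝ (hFeq ▸ Set.inter_subset_right))
    · refine le_affineSpan_of_ball_subset (M := affineSpan ℝ G ⊓ affineSpan ℝ H)
        (z := z) (ε := min ε₁ ε₂) ⟨hzGspan, hzHspan⟩ (lt_min hε₁ hε₂) ?_
      intro y hy hdist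
      rw [hFeq]
      exact ⟨hball₁ y hy.1 (lt_of_lt_of_le hdist (min_le_left _ _)),
        hball₂ y hy.2 (lt_of_lt_of_le hdist (min_le_right _ _))⟩
  have hdirF : (affineSpan ℝ F).direction
      = (affineSpan ℝ G).direction ⊓ (affineSpan ℝ H).direction := by
    rw [hspanF, AffineSubspace.direction_inf_of_mem hzGspan hzHspan]
  -- dimension count
  have hfin := Submodule.finrank_sup_add_finrank_inf_eq
    (affineSpan ℝ G).direction (affineSpan ℝ H).direction
  rw [hsupGH, ← hdirF] at hfin
  have htop : Module.finrank ℝ (⊤ : Submodule ℝ (Euc d)) = d := by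
    rw [finrank_top]; exact finrank_euclideanSpace_fin
  have hGle : setDim G ≤ d := by
    have := Submodule.finrank_le (affineSpan ℝ G).direction
    simpa [setDim, finrank_euclideanSpace_fin] using this
  have hHle : setDim H ≤ d := by
    have := Submodule.finrank_le (affineSpan ℝ H).direction
    simpa [setDim, finrank_euclideanSpace_fin] using this
  have hcount : setDim G + setDim H = d + j := by
    unfold setDim at hFdim ⊢
    rw [htop, hFdim] at hfin
    omega
  -- assemble
  refine ⟨setDim G, by omega, hGle, G, ⟨⟨hGne, hGconv, hGext⟩, rfl⟩,
    H, ⟨⟨hHne, hHconv, hHext⟩, by omega⟩, ?_⟩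
  apply Set.Subset.antisymm
  · intro y hyF
    have hyG : y ∈ G := (hFeq ▸ hyF).1
    have hyH : y ∈ H := (hFeq ▸ hyF).2
    have hseg : openSegment ℝ z y ⊆ intrinsicInterior ℝ G ∩ intrinsicInterior ℝ H :=
      Set.subset_inter (openSegment_subset_intrinsicInterior hGconv hzG hyG)
        (openSegment_subset_intrinsicInterior hHconv hzH hyH)
    exact closure_mono hseg (segment_subset_closure_openSegment (right_mem_segment ℝ z y))
  · have hGclosed : IsClosed G := by
      rw [hGhull]
      exact ((↑T : Set (Euc d)).toFinite.isCompact_convexHull ℝ).isClosed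
    have hHclosed : IsClosed H := by
      rw [hH', hH₀hull]
      exact isClosed_shiftSet ((↑T' : Set (Euc d)).toFinite.isCompact_convexHull ℝ).isClosed x
    refine closure_minimal ?_ (hFeq ▸ hGclosed.inter hHclosed)
    rw [hFeq]
    exact Set.inter_subset_inter intrinsicInterior_subset intrinsicInterior_subset


def N (T T' : Finset (Euc d)) : Set (Euc d) :=
  {x | (affineSpan ℝ (↑T : Set (Euc d))).direction
      ⊔ (affineSpan ℝ (↑T' : Set (Euc d))).direction ≠ ⊤ ∧
    ∃ a ∈ affineSpan ℝ (↑T : Set (Euc d)),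
      ∃ b ∈ affineSpan ℝ (↑T' : Set (Euc d)), x = a - b}

end Stmt18Aux
end

open Stmt18Aux

/-- for polytopes `P`, `Q`, almost every translate of `Q` is in mutual general
position with `P`. -/
theorem stmt_18 {d : ℕ} (hd : 1 ≤ d) (P Q : Set (Euc d))
    (hP : IsPolytope P) (hQ : IsPolytope Q) :
    volume {x : Euc d | ¬ MutualGenPos P (shiftSet x Q)} = 0 := by
  obtain ⟨S, hSne, rfl⟩ := hP
  obtain ⟨S', hS'ne, rfl⟩ := hQ
  have hN : ∀ T T' : Finset (Euc d), volume (N T T') = 0 := by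
    intro T T'
    by_cases hsup : (affineSpan ℝ (↑T : Set (Euc d))).direction
        ⊔ (affineSpan ℝ (↑T' : Set (Euc d))).direction = ⊤
    · have : N T T' = ∅ := by
        apply Set.eq_empty_iff_forall_notMem.2
        rintro y ⟨hdir, -⟩
        exact hdir hsup
      rw [this]; exact measure_empty
    · rcases Set.eq_empty_or_nonempty
          ((affineSpan ℝ (↑T : Set (Euc d)) : Set (Euc d))) with hbot | ⟨a₀, ha₀⟩
      · have : N T T' = ∅ := by
          apply Set.eq_empty_iff_forall_notMem.2
          rintro y ⟨-, a, ha, -⟩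
          exact Set.notMem_empty a (hbot ▸ ha)
        rw [this]; exact measure_empty
      rcases Set.eq_empty_or_nonempty
          ((affineSpan ℝ (↑T' : Set (Euc d)) : Set (Euc d))) with hbot' | ⟨b₀, hb₀⟩
      · have : N T T' = ∅ := by
          apply Set.eq_empty_iff_forall_notMem.2
          rintro y ⟨-, a, ha, b, hb, -⟩
          exact Set.notMem_empty b (hbot' ▸ hb)
        rw [this]; exact measure_empty
      · set W : Submodule ℝ (Euc d) := (affineSpan ℝ (↑T : Set (Euc d))).direction
          ⊔ (affineSpan ℝ (↑T' : Set (Euc d))).direction with hWdef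
        set A : AffineSubspace ℝ (Euc d) := AffineSubspace.mk' (a₀ - b₀) W with hAdef
        have hAne : A ≠ ⊤ := by
          intro htop
          apply hsup
          rw [← AffineSubspace.direction_mk' (a₀ - b₀) W, ← hAdef, htop,
            AffineSubspace.direction_top]
        apply measure_mono_null _ (Measure.addHaar_affineSubspace volume A hAne)
        rintro y ⟨hdir, a, ha, b, hb, rfl⟩
        show a - b ∈ A
        rw [hAdef, AffineSubspace.mem_mk']
        have h1 : a - a₀ ∈ (affineSpan ℝ (↑T : Set (Euc d))).direction :=
          AffineSubspace.vsub_mem_direction ha ha₀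
        have h2 : b - b₀ ∈ (affineSpan ℝ (↑T' : Set (Euc d))).direction :=
          AffineSubspace.vsub_mem_direction hb hb₀
        have heq : (a - b) -ᵥ (a₀ - b₀) = (a - a₀) - (b - b₀) := by
          rw [vsub_eq_sub]; abel
        rw [heq]
        exact Submodule.sub_mem W (Submodule.mem_sup_left h1) (Submodule.mem_sup_right h2)
  have hsubset : {x : Euc d | ¬ MutualGenPos (convexHull ℝ (↑S : Set (Euc d)))
        (shiftSet x (convexHull ℝ (↑S' : Set (Euc d))))}
      ⊆ ⋃ T ∈ (↑S.powerset : Set (Finset (Euc d))),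
          ⋃ T' ∈ (↑S'.powerset : Set (Finset (Euc d))), N T T' := by
    intro x hx
    simp only [Set.mem_setOf_eq] at hx
    by_contra hxu
    apply hx
    apply good_mutualGenPos S S' x
    intro T T' hT hT' hdir a ha b hb hxeq
    apply hxu
    refine Set.mem_biUnion (Finset.mem_coe.2 (Finset.mem_powerset.2 hT)) ?_
    refine Set.mem_biUnion (Finset.mem_coe.2 (Finset.mem_powerset.2 hT')) ?_
    exact ⟨hdir, a, ha, b, hb, hxeq⟩
  apply measure_mono_null hsubset
  rw [measure_biUnion_null_iff S.powerset.countable_toSet]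
  intro T _
  rw [measure_biUnion_null_iff S'.powerset.countable_toSet]
  intro T' _
  exact hN T T'
end
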